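/- arXiv:2503.22867 — 3 statements merged into one kernel-verified Lean document; each statement's English description precedes it below -/
import Mathlib

section
/- Under Assumption 1 (d_θ(s) > 0 for all s ∈ S and all θ ∈ X), every first-order stationary policy of a finite Markov game under direct policy parameterization is a Nash equilibrium: if θ* ∈ X satisfies (θ_i' − θ_i*)ᵀ ∇_{θ_i} J_i(θ*) ≤ 0 for every θ_i' ∈ X_i and every agent i, then J_i(θ_i*, θ_{-i}*) ≥ J_i(θ_i', θ_{-i}*) for every θ_i' ∈ X_i and every agent i. -/
open scoped BigOperators

/-! Common framework for finite Markov games under direct policy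
parameterization.  Agents are indexed by `Fin N`, the state space `S` and the
action spaces `A i` are finite.  A policy profile is `θ : ∀ i, S → A i → ℝ`,
feasible when each `θ i s` lies in the probability simplex. -/

section MGDefs

variable {N : ℕ} {S : Type} {A : Fin N → Type}
variable [Fintype S] [∀ i, Fintype (A i)]

/-- Joint policy `π_θ(a|s) = ∏ i, θ_i(a_i|s)` induced by the per-agent
directly parameterized policies. -/
def jointPi (θ : ∀ i, S → A i → ℝ) : S → (∀ i, A i) → ℝ :=
  fun s a => ∏ i, θ i s (a i)

/-- Distribution of the state at time `t` under transition kernel `P`,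
policy `π` and initial distribution `ρ`. -/
def stateDist {σ α : Type} [Fintype σ] [Fintype α] (P : σ → α → σ → ℝ)
    (π : σ → α → ℝ) (ρ : σ → ℝ) : ℕ → σ → ℝ
  | 0 => ρ
  | t + 1 => fun s' => ∑ s, ∑ a, stateDist P π ρ t s * π s a * P s a s'

/-- Expected discounted sum `E[∑ₜ γ^t f(s_t, a_t)]` of a state-action
function `f`, under kernel `P`, policy `π`, and initial distribution `ρ`. -/
noncomputable def expDisc {σ α : Type} [Fintype σ] [Fintype α] (γ : ℝ)
    (P : σ → α → σ → ℝ) (π : σ → α → ℝ) (ρ : σ → ℝ) (f : σ → α → ℝ) : ℝ :=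
  ∑' t : ℕ, γ ^ t * ∑ s, ∑ a, stateDist P π ρ t s * π s a * f s a

/-- Dirac (point-mass) distribution at `s`. -/
def dirac {σ : Type} [DecidableEq σ] (s : σ) : σ → ℝ :=
  fun s' => if s' = s then 1 else 0

/-- Value function `V^θ(s) = E[∑ₜ γ^t f(s_t,a_t) | π_θ, s_0 = s]`. -/
noncomputable def valueV [DecidableEq S] (γ : ℝ) (P : S → (∀ i, A i) → S → ℝ)
    (θ : ∀ i, S → A i → ℝ) (f : S → (∀ i, A i) → ℝ) (s : S) : ℝ :=
  expDisc γ P (jointPi θ) (dirac s) f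

/-- Total objective `J(θ) = E_{s₀ ∼ ρ}[∑ₜ γ^t f(s_t,a_t) | π_θ]`. -/
noncomputable def Jtot (γ : ℝ) (P : S → (∀ i, A i) → S → ℝ) (ρ : S → ℝ)
    (θ : ∀ i, S → A i → ℝ) (f : S → (∀ i, A i) → ℝ) : ℝ :=
  expDisc γ P (jointPi θ) ρ f

/-- The feasible set `X = X_1 × ⋯ × X_N`, `X_i = Δ(A_i)^S`. -/
def feasible (θ : ∀ i, S → A i → ℝ) : Prop :=
  ∀ i, ∀ s, θ i s ∈ stdSimplex ℝ (A i)

/-- Discounted state-visitation measure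
`d_θ(s) = (1-γ) E_{s₀∼ρ} ∑ₜ γ^t Pr^θ(s_t = s | s₀)`. -/
noncomputable def visit (γ : ℝ) (P : S → (∀ i, A i) → S → ℝ)
    (θ : ∀ i, S → A i → ℝ) (ρ : S → ℝ) (s : S) : ℝ :=
  (1 - γ) * ∑' t : ℕ, γ ^ t * stateDist P (jointPi θ) ρ t s

end MGDefs

section NashAux
open Matrix
set_option linter.unusedSectionVars false
set_option maxHeartbeats 1000000

attribute [local instance] Matrix.linftyOpNormedAddCommGroup Matrix.linftyOpNormedRing
  Matrix.linftyOpNormedAlgebra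

section GenericMDP

variable {S α : Type} [Fintype S] [DecidableEq S] [Fintype α]

/-- Transition matrix induced by kernel `P` and policy `π`. -/
def Mmat (P : S → α → S → ℝ) (π : S → α → ℝ) : Matrix S S ℝ :=
  Matrix.of fun s s' => ∑ a, π s a * P s a s'

/-- One-step expected reward vector of a policy. -/
def Rvec (f : S → α → ℝ) (π : S → α → ℝ) : S → ℝ :=
  fun s => ∑ a, π s a * f s a

lemma stateDist_eq (P : S → α → S → ℝ) (π : S → α → ℝ) (ρ : S → ℝ) (t : ℕ) :
    stateDist P π ρ t = ρ ᵥ* (Mmat P π) ^ t := by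
  induction t with
  | zero => simp [stateDist]
  | succ t ih =>
      funext s'
      show (∑ s, ∑ a, stateDist P π ρ t s * π s a * P s a s') = _
      rw [pow_succ, ← Matrix.vecMul_vecMul, ← ih]
      simp only [Matrix.vecMul, dotProduct, Mmat, Matrix.of_apply, Finset.mul_sum]
      exact Finset.sum_congr rfl fun s _ => Finset.sum_congr rfl fun a _ => by ring

/-- The evaluation `W ↦ ρ ⬝ᵥ W *ᵥ v` as a linear map. -/
def dotL (ρ v : S → ℝ) : Matrix S S ℝ →ₗ[ℝ] ℝ where
  toFun W := ρ ⬝ᵥ W *ᵥ v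
  map_add' W₁ W₂ := by simp [Matrix.add_mulVec, dotProduct_add]
  map_smul' c W := by simp [Matrix.smul_mulVec, dotProduct_smul]

noncomputable def dotCLM (ρ v : S → ℝ) : Matrix S S ℝ →L[ℝ] ℝ :=
  (dotL ρ v).toContinuousLinearMap

@[simp] lemma dotCLM_apply (ρ v : S → ℝ) (W : Matrix S S ℝ) :
    dotCLM ρ v W = ρ ⬝ᵥ W *ᵥ v := rfl

lemma exp_eq (γ : ℝ) (P : S → α → S → ℝ) (π : S → α → ℝ) (ρ v : S → ℝ)
    (h : ‖γ • Mmat P π‖ < 1) :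
    ∑' t : ℕ, γ ^ t * (stateDist P π ρ t ⬝ᵥ v)
      = ρ ⬝ᵥ (Ring.inverse ((1 : Matrix S S ℝ) - γ • Mmat P π)) *ᵥ v := by
  have hsum := summable_geometric_of_norm_lt_one h
  have h1 : ∀ t : ℕ, γ ^ t * (stateDist P π ρ t ⬝ᵥ v)
      = dotCLM ρ v ((γ • Mmat P π) ^ t) := by
    intro t
    rw [stateDist_eq, smul_pow, dotCLM_apply, Matrix.smul_mulVec,
      dotProduct_smul, Matrix.dotProduct_mulVec, smul_eq_mul]
  rw [tsum_congr h1, ← (dotCLM ρ v).map_tsum hsum]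
  exact congrArg (dotCLM ρ v) (geom_series_eq_inverse _ h)

lemma expDisc_eq (γ : ℝ) (P : S → α → S → ℝ) (π : S → α → ℝ) (ρ : S → ℝ) (f : S → α → ℝ)
    (h : ‖γ • Mmat P π‖ < 1) :
    expDisc γ P π ρ f
      = ρ ⬝ᵥ (Ring.inverse ((1 : Matrix S S ℝ) - γ • Mmat P π)) *ᵥ Rvec f π := by
  rw [expDisc, ← exp_eq γ P π ρ (Rvec f π) h]
  refine tsum_congr fun t => ?_
  congr 1
  simp only [dotProduct, Rvec, Finset.mul_sum, mul_assoc]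

lemma norm_Mmat_le (P : S → α → S → ℝ) (hP : ∀ s a, P s a ∈ stdSimplex ℝ S)
    (π : S → α → ℝ) (hπ : ∀ s, π s ∈ stdSimplex ℝ α) : ‖Mmat P π‖ ≤ 1 := by
  have hrow : ∀ s, ∑ s', ‖Mmat P π s s'‖₊ ≤ 1 := by
    intro s
    rw [← NNReal.coe_le_coe]
    push_cast [coe_nnnorm]
    have hnn : ∀ s', 0 ≤ Mmat P π s s' := fun s' =>
      Finset.sum_nonneg fun a _ => mul_nonneg ((hπ s).1 a) ((hP s a).1 s')
    calc ∑ s', ‖Mmat P π s s'‖ = ∑ s', Mmat P π s s' := by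
          exact Finset.sum_congr rfl fun s' _ => Real.norm_of_nonneg (hnn s')
      _ = ∑ a, π s a * ∑ s', P s a s' := by
          simp only [Mmat, Matrix.of_apply, Finset.mul_sum]
          exact Finset.sum_comm
      _ = 1 := by
          simp only [(hP s _).2]
          simpa using (hπ s).2
      _ ≤ 1 := le_rfl
  rw [Matrix.linfty_opNorm_def]
  have : ((Finset.univ : Finset S).sup fun s : S => ∑ s', ‖Mmat P π s s'‖₊) ≤ 1 :=
    Finset.sup_le fun s _ => hrow s
  exact_mod_cast this

lemma norm_smul_Mmat_lt (γ : ℝ) (hγ0 : 0 ≤ γ) (hγ1 : γ < 1)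
    (P : S → α → S → ℝ) (hP : ∀ s a, P s a ∈ stdSimplex ℝ S)
    (π : S → α → ℝ) (hπ : ∀ s, π s ∈ stdSimplex ℝ α) : ‖γ • Mmat P π‖ < 1 := by
  have h1 : ‖Mmat P π‖ ≤ 1 := norm_Mmat_le P hP π hπ
  have h2 : ‖γ • Mmat P π‖ = γ * ‖Mmat P π‖ := by
    rw [norm_smul, Real.norm_eq_abs, abs_of_nonneg hγ0]
  have h3 : γ * ‖Mmat P π‖ ≤ γ * 1 := mul_le_mul_of_nonneg_left h1 hγ0
  rw [h2]; linarith

lemma pow_entry_nonneg (W : Matrix S S ℝ) (h : ∀ s s', 0 ≤ W s s') (t : ℕ) :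
    ∀ s s', 0 ≤ (W ^ t) s s' := by
  induction t with
  | zero => intro s s'; by_cases hss : s = s' <;> simp [pow_zero, Matrix.one_apply, hss]
  | succ t ih =>
      intro s s'
      rw [pow_succ, Matrix.mul_apply]
      exact Finset.sum_nonneg fun j _ => mul_nonneg (ih s j) (h j s')

lemma inverse_entry_nonneg (W : Matrix S S ℝ) (h0 : ∀ s s', 0 ≤ W s s') (h : ‖W‖ < 1)
    (s s' : S) : 0 ≤ Ring.inverse ((1 : Matrix S S ℝ) - W) s s' := by
  rw [← geom_series_eq_inverse W h]
  have hsum := summable_geometric_of_norm_lt_one h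
  have hmap := (dotCLM (Pi.single s (1 : ℝ)) (Pi.single s' (1 : ℝ))).map_tsum hsum
  have hentry : ∀ X : Matrix S S ℝ,
      dotCLM (Pi.single s (1 : ℝ)) (Pi.single s' (1 : ℝ)) X = X s s' := by
    intro X
    rw [dotCLM_apply, single_dotProduct]
    simp [Matrix.mulVec, dotProduct_single]
  have : (∑' t : ℕ, W ^ t) s s' = ∑' t : ℕ, (W ^ t) s s' := by
    rw [← hentry (∑' t : ℕ, W ^ t), hmap]
    exact tsum_congr fun t => hentry _
  exact (tsum_nonneg fun t => pow_entry_nonneg W h0 t s s').trans_eq this.symm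

end GenericMDP
section GameAux
open Matrix
set_option linter.unusedSectionVars false
set_option maxHeartbeats 1000000
attribute [local instance] Matrix.linftyOpNormedAddCommGroup Matrix.linftyOpNormedRing
  Matrix.linftyOpNormedAlgebra

variable {N : ℕ} {S : Type} {A : Fin N → Type}
variable [Fintype S] [DecidableEq S] [∀ i, Fintype (A i)]

def cprod (θ : ∀ i, S → A i → ℝ) (i : Fin N) : S → (∀ j, A j) → ℝ :=
  fun s a => ∏ j ∈ Finset.univ.erase i, θ j s (a j)

def piUp (θ : ∀ i, S → A i → ℝ) (i : Fin N) (x : S → A i → ℝ) : S → (∀ j, A j) → ℝ :=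
  fun s a => x s (a i) * cprod θ i s a

lemma jointPi_update (θ : ∀ i, S → A i → ℝ) (i : Fin N) (x : S → A i → ℝ) :
    jointPi (Function.update θ i x) = piUp θ i x := by
  funext s a
  show ∏ j, Function.update θ i x j s (a j) = _
  rw [← Finset.mul_prod_erase Finset.univ _ (Finset.mem_univ i), Function.update_self]
  unfold piUp cprod
  congr 1
  exact Finset.prod_congr rfl fun j hj => by
    rw [Function.update_of_ne (Finset.ne_of_mem_erase hj)]

lemma piUp_self (θ : ∀ i, S → A i → ℝ) (i : Fin N) : piUp θ i (θ i) = jointPi θ := by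
  rw [← jointPi_update, Function.update_eq_self]

lemma jointPi_mem (ϑ : ∀ i, S → A i → ℝ) (hϑ : feasible ϑ) (s : S) :
    jointPi ϑ s ∈ stdSimplex ℝ (∀ j, A j) := by
  constructor
  · intro a
    exact Finset.prod_nonneg fun j _ => (hϑ j s).1 (a j)
  · show (∑ a : ∀ j, A j, ∏ j, ϑ j s (a j)) = 1
    rw [← Fintype.prod_sum]
    exact Finset.prod_eq_one fun j _ => (hϑ j s).2

def LmL (P : S → (∀ j, A j) → S → ℝ) (θ : ∀ i, S → A i → ℝ) (i : Fin N) :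
    (S → A i → ℝ) →ₗ[ℝ] Matrix S S ℝ where
  toFun x := Mmat P (piUp θ i x)
  map_add' x y := by
    ext s s'
    simp [Mmat, piUp, add_mul, Finset.sum_add_distrib]
  map_smul' c x := by
    ext s s'
    simp [Mmat, piUp, Finset.mul_sum, mul_assoc]

def LrL (f : S → (∀ j, A j) → ℝ) (θ : ∀ i, S → A i → ℝ) (i : Fin N) :
    (S → A i → ℝ) →ₗ[ℝ] (S → ℝ) where
  toFun x := Rvec f (piUp θ i x)
  map_add' x y := by
    funext s
    simp [Rvec, piUp, add_mul, Finset.sum_add_distrib]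
  map_smul' c x := by
    funext s
    simp [Rvec, piUp, Finset.mul_sum, mul_assoc]

def BL (ρ : S → ℝ) : Matrix S S ℝ →ₗ[ℝ] (S → ℝ) →ₗ[ℝ] ℝ :=
  LinearMap.mk₂ ℝ (fun W v => ρ ⬝ᵥ W *ᵥ v)
    (fun W₁ W₂ v => by simp [Matrix.add_mulVec, dotProduct_add])
    (fun c W v => by simp [Matrix.smul_mulVec, dotProduct_smul])
    (fun W v₁ v₂ => by simp [Matrix.mulVec_add, dotProduct_add])
    (fun c W v => by simp [Matrix.mulVec_smul, dotProduct_smul])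

noncomputable def BC (ρ : S → ℝ) : Matrix S S ℝ →L[ℝ] (S → ℝ) →L[ℝ] ℝ :=
  LinearMap.toContinuousLinearMap
    { toFun := fun W => LinearMap.toContinuousLinearMap (BL ρ W)
      map_add' := fun W₁ W₂ => by
        ext v; simp [BL, Matrix.add_mulVec, add_dotProduct, dotProduct_add]
      map_smul' := fun c W => by
        ext v; simp [BL, Matrix.smul_mulVec, dotProduct_smul] }

@[simp] lemma BC_apply (ρ v : S → ℝ) (W : Matrix S S ℝ) : BC ρ W v = ρ ⬝ᵥ W *ᵥ v := rfl

/-- resolvent matrix `(I - γ M_π)⁻¹`. -/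
noncomputable def Wmat (γ : ℝ) (P : S → (∀ j, A j) → S → ℝ) (π : S → (∀ j, A j) → ℝ) :
    Matrix S S ℝ :=
  Ring.inverse ((1 : Matrix S S ℝ) - γ • Mmat P π)

/-- value vector of policy `π`. -/
noncomputable def Vvec (γ : ℝ) (P : S → (∀ j, A j) → S → ℝ) (f : S → (∀ j, A j) → ℝ)
    (π : S → (∀ j, A j) → ℝ) : S → ℝ :=
  Wmat γ P π *ᵥ Rvec f π

/-- state-action value of the base policy. -/
noncomputable def Qfun (γ : ℝ) (P : S → (∀ j, A j) → S → ℝ) (f : S → (∀ j, A j) → ℝ)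
    (θ : ∀ i, S → A i → ℝ) (i : Fin N) : S → (∀ j, A j) → ℝ :=
  fun s a => f s a + γ * ∑ s', P s a s' * Vvec γ P f (piUp θ i (θ i)) s'

/-- closed form of the objective as a function of agent `i`'s policy. -/
noncomputable def Gfun (γ : ℝ) (P : S → (∀ j, A j) → S → ℝ) (f : S → (∀ j, A j) → ℝ)
    (θ : ∀ i, S → A i → ℝ) (i : Fin N) (ρ : S → ℝ) : (S → A i → ℝ) → ℝ :=
  fun x => BC ρ (Ring.inverse ((1 : Matrix S S ℝ) - γ • Mmat P (piUp θ i x)))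
    (Rvec f (piUp θ i x))

lemma Gfun_eq (γ : ℝ) (P : S → (∀ j, A j) → S → ℝ) (f : S → (∀ j, A j) → ℝ)
    (θ : ∀ i, S → A i → ℝ) (i : Fin N) (ρ : S → ℝ) (x : S → A i → ℝ) :
    Gfun γ P f θ i ρ x = ρ ⬝ᵥ Vvec γ P f (piUp θ i x) := by
  rw [Gfun, BC_apply, Vvec, Wmat]

variable (γ : ℝ) (P : S → (∀ j, A j) → S → ℝ) (f : S → (∀ j, A j) → ℝ)
variable (θ : ∀ i, S → A i → ℝ) (i : Fin N) (ρ : S → ℝ)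

lemma fderiv_Gfun_apply (x₀ : S → A i → ℝ)
    (h : ‖γ • Mmat P (piUp θ i x₀)‖ < 1) (u : S → A i → ℝ) :
    fderiv ℝ (Gfun γ P f θ i ρ) x₀ u
      = ρ ⬝ᵥ (Ring.inverse ((1 : Matrix S S ℝ) - γ • Mmat P (piUp θ i x₀))) *ᵥ
          (Rvec f (piUp θ i u) +
            γ • (Mmat P (piUp θ i u)) *ᵥ
              ((Ring.inverse ((1 : Matrix S S ℝ) - γ • Mmat P (piUp θ i x₀))) *ᵥ
                Rvec f (piUp θ i x₀))) := by
  classical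
  set LmC : (S → A i → ℝ) →L[ℝ] Matrix S S ℝ :=
    LinearMap.toContinuousLinearMap (LmL P θ i) with hLmC
  set LrC : (S → A i → ℝ) →L[ℝ] (S → ℝ) :=
    LinearMap.toContinuousLinearMap (LrL f θ i) with hLrC
  have hLm_app : ∀ x, LmC x = Mmat P (piUp θ i x) := fun _ => rfl
  have hLr_app : ∀ x, LrC x = Rvec f (piUp θ i x) := fun _ => rfl
  set u1 : (Matrix S S ℝ)ˣ := Units.oneSub (γ • Mmat P (piUp θ i x₀)) h with hu1
  set W : Matrix S S ℝ := ↑u1⁻¹ with hW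
  have hWinv : Ring.inverse ((1 : Matrix S S ℝ) - γ • Mmat P (piUp θ i x₀)) = W := by
    rw [hW, ← Ring.inverse_unit u1]
    rfl
  have hK : HasFDerivAt (fun x => (1 : Matrix S S ℝ) - γ • LmC x) (-(γ • LmC)) x₀ := by
    have h0 : HasFDerivAt (fun x => (γ • LmC) x) (γ • LmC) x₀ :=
      (γ • LmC).hasFDerivAt
    exact h0.const_sub (1 : Matrix S S ℝ)
  have hKx₀ : (1 : Matrix S S ℝ) - γ • LmC x₀ = ↑u1 := rfl
  have hinv0 : HasFDerivAt (Ring.inverse : Matrix S S ℝ → Matrix S S ℝ)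
      (-ContinuousLinearMap.mulLeftRight ℝ _ W W)
      ((fun x => (1 : Matrix S S ℝ) - γ • LmC x) x₀) := by
    show HasFDerivAt _ _ ((1 : Matrix S S ℝ) - γ • LmC x₀)
    rw [hKx₀]
    exact hasFDerivAt_ringInverse u1
  have hInv : HasFDerivAt (fun x => Ring.inverse ((1 : Matrix S S ℝ) - γ • LmC x))
      ((-ContinuousLinearMap.mulLeftRight ℝ _ W W).comp (-(γ • LmC))) x₀ :=
    HasFDerivAt.comp (g := Ring.inverse) x₀ hinv0 hK
  have hc : HasFDerivAt (fun x => BC ρ (Ring.inverse ((1 : Matrix S S ℝ) - γ • LmC x)))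
      ((BC ρ).comp ((-ContinuousLinearMap.mulLeftRight ℝ _ W W).comp (-(γ • LmC)))) x₀ :=
    (BC ρ).hasFDerivAt.comp x₀ hInv
  have hG : HasFDerivAt
      (fun x => BC ρ (Ring.inverse ((1 : Matrix S S ℝ) - γ • LmC x)) (LrC x))
      (((BC ρ (Ring.inverse ((1 : Matrix S S ℝ) - γ • LmC x₀))).comp LrC) +
        ((BC ρ).comp
          ((-ContinuousLinearMap.mulLeftRight ℝ _ W W).comp (-(γ • LmC)))).flip (LrC x₀))
      x₀ := hc.clm_apply LrC.hasFDerivAt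
  have hGfun : Gfun γ P f θ i ρ
      = fun x => BC ρ (Ring.inverse ((1 : Matrix S S ℝ) - γ • LmC x)) (LrC x) := rfl
  rw [hGfun, hG.fderiv]
  simp only [ContinuousLinearMap.add_apply, ContinuousLinearMap.coe_comp', Function.comp_apply,
    ContinuousLinearMap.flip_apply, ContinuousLinearMap.neg_apply, ContinuousLinearMap.smul_apply,
    map_neg, neg_neg, ContinuousLinearMap.mulLeftRight_apply, hLm_app, hLr_app, hWinv, BC_apply]
  change _ + ρ ⬝ᵥ (-(W * (-(γ • Mmat P (piUp θ i u))) * W)) *ᵥ Rvec f (piUp θ i x₀) = _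
  simp only [mul_neg, neg_mul, neg_neg]
  rw [Matrix.mulVec_add]
  rw [← Matrix.mulVec_mulVec, ← Matrix.mulVec_mulVec, Matrix.smul_mulVec]
  rw [dotProduct_add]

/-- expansion of the one-step operator through `Q`. -/
lemma hexp_lemma (π : S → (∀ j, A j) → ℝ) (s : S) :
    Rvec f π s + γ * ((Mmat P π) *ᵥ Vvec γ P f (piUp θ i (θ i))) s
      = ∑ a, π s a * Qfun γ P f θ i s a := by
  have h1 : γ * ((Mmat P π *ᵥ Vvec γ P f (piUp θ i (θ i))) s)
      = ∑ a, π s a * (γ * ∑ s', P s a s' * Vvec γ P f (piUp θ i (θ i)) s') := by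
    calc γ * ((Mmat P π *ᵥ Vvec γ P f (piUp θ i (θ i))) s)
        = ∑ s', ∑ a, π s a * (γ * (P s a s' * Vvec γ P f (piUp θ i (θ i)) s')) := by
          simp only [Matrix.mulVec, dotProduct, Mmat, Matrix.of_apply, Finset.mul_sum]
          refine Finset.sum_congr rfl fun s' _ => ?_
          rw [Finset.sum_mul, Finset.mul_sum]
          exact Finset.sum_congr rfl fun a _ => by ring
      _ = ∑ a, ∑ s', π s a * (γ * (P s a s' * Vvec γ P f (piUp θ i (θ i)) s')) :=
          Finset.sum_comm
      _ = ∑ a, π s a * (γ * ∑ s', P s a s' * Vvec γ P f (piUp θ i (θ i)) s') := by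
          refine Finset.sum_congr rfl fun a _ => ?_
          simp only [Finset.mul_sum]
  rw [h1, Rvec, ← Finset.sum_add_distrib]
  exact Finset.sum_congr rfl fun a _ => by rw [Qfun]; ring

lemma bellman (h : ‖γ • Mmat P (piUp θ i (θ i))‖ < 1) (s : S) :
    Vvec γ P f (piUp θ i (θ i)) s = ∑ a, piUp θ i (θ i) s a * Qfun γ P f θ i s a := by
  have hKW : ((1 : Matrix S S ℝ) - γ • Mmat P (piUp θ i (θ i)))
      * Wmat γ P (piUp θ i (θ i)) = 1 := by
    rw [Wmat, show ((1 : Matrix S S ℝ) - γ • Mmat P (piUp θ i (θ i)))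
        = ↑(Units.oneSub (γ • Mmat P (piUp θ i (θ i))) h) from rfl, Ring.inverse_unit]
    exact Units.mul_inv _
  have hKV : ((1 : Matrix S S ℝ) - γ • Mmat P (piUp θ i (θ i))) *ᵥ
      Vvec γ P f (piUp θ i (θ i)) = Rvec f (piUp θ i (θ i)) := by
    rw [Vvec, Matrix.mulVec_mulVec, hKW, Matrix.one_mulVec]
  have hpt : Vvec γ P f (piUp θ i (θ i)) s
      - γ * ((Mmat P (piUp θ i (θ i))) *ᵥ Vvec γ P f (piUp θ i (θ i))) s
      = Rvec f (piUp θ i (θ i)) s := by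
    have h5 := congrFun hKV s
    rw [Matrix.sub_mulVec, Matrix.one_mulVec, Matrix.smul_mulVec] at h5
    simpa using h5
  have h6 := hexp_lemma γ P f θ i (piUp θ i (θ i)) s
  linarith

lemma deriv_formula (h : ‖γ • Mmat P (piUp θ i (θ i))‖ < 1) (u : S → A i → ℝ) :
    fderiv ℝ (Gfun γ P f θ i ρ) (θ i) u
      = ρ ⬝ᵥ Wmat γ P (piUp θ i (θ i)) *ᵥ
          (fun s => ∑ a, piUp θ i u s a * Qfun γ P f θ i s a) := by
  rw [fderiv_Gfun_apply γ P f θ i ρ (θ i) h u]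
  have hvec : (Rvec f (piUp θ i u) +
      γ • Mmat P (piUp θ i u) *ᵥ
        (Ring.inverse ((1 : Matrix S S ℝ) - γ • Mmat P (piUp θ i (θ i))) *ᵥ
          Rvec f (piUp θ i (θ i))))
      = fun s => ∑ a, piUp θ i u s a * Qfun γ P f θ i s a := by
    funext s
    rw [Pi.add_apply, Pi.smul_apply, smul_eq_mul]
    exact hexp_lemma γ P f θ i (piUp θ i u) s
  rw [hvec]
  rfl

lemma visit_closed (ϑ : ∀ i, S → A i → ℝ) (h : ‖γ • Mmat P (jointPi ϑ)‖ < 1) (s : S) :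
    visit γ P ϑ ρ s = (1 - γ) * (ρ ⬝ᵥ Wmat γ P (jointPi ϑ) *ᵥ Pi.single s 1) := by
  rw [visit, Wmat, ← exp_eq γ P (jointPi ϑ) ρ (Pi.single s 1) h]
  congr 1
  refine tsum_congr fun t => ?_
  congr 1
  rw [dotProduct_single, mul_one]

lemma pdl (hγ0 : 0 ≤ γ) (hρ : ∀ s, 0 ≤ ρ s)
    (x' : S → A i → ℝ)
    (hn' : ‖γ • Mmat P (piUp θ i x')‖ < 1)
    (hPnn : ∀ s a s', 0 ≤ P s a s') (hπnn : ∀ s a, 0 ≤ piUp θ i x' s a)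
    (hQV : ∀ s, (∑ a, piUp θ i x' s a * Qfun γ P f θ i s a)
      ≤ Vvec γ P f (piUp θ i (θ i)) s) :
    ρ ⬝ᵥ Vvec γ P f (piUp θ i x') ≤ ρ ⬝ᵥ Vvec γ P f (piUp θ i (θ i)) := by
  have hW'K : Wmat γ P (piUp θ i x') * ((1 : Matrix S S ℝ) - γ • Mmat P (piUp θ i x')) = 1 := by
    rw [Wmat, show ((1 : Matrix S S ℝ) - γ • Mmat P (piUp θ i x'))
        = ↑(Units.oneSub (γ • Mmat P (piUp θ i x')) hn') from rfl, Ring.inverse_unit]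
    exact Units.inv_mul _
  have hVdiff : Vvec γ P f (piUp θ i x') - Vvec γ P f (piUp θ i (θ i))
      = Wmat γ P (piUp θ i x') *ᵥ
        (Rvec f (piUp θ i x')
          + γ • (Mmat P (piUp θ i x') *ᵥ Vvec γ P f (piUp θ i (θ i)))
          - Vvec γ P f (piUp θ i (θ i))) := by
    have h2 : Rvec f (piUp θ i x')
          + γ • (Mmat P (piUp θ i x') *ᵥ Vvec γ P f (piUp θ i (θ i)))
          - Vvec γ P f (piUp θ i (θ i))
        = Rvec f (piUp θ i x')
          - ((1 : Matrix S S ℝ) - γ • Mmat P (piUp θ i x')) *ᵥ Vvec γ P f (piUp θ i (θ i)) := by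
      rw [Matrix.sub_mulVec, Matrix.one_mulVec, Matrix.smul_mulVec]
      abel
    rw [h2, Matrix.mulVec_sub, Matrix.mulVec_mulVec, hW'K, Matrix.one_mulVec]
    rfl
  have hwv_le : ∀ s, (Rvec f (piUp θ i x')
      + γ • (Mmat P (piUp θ i x') *ᵥ Vvec γ P f (piUp θ i (θ i)))
      - Vvec γ P f (piUp θ i (θ i))) s ≤ 0 := by
    intro s
    have h3 := hexp_lemma γ P f θ i (piUp θ i x') s
    have h4 := hQV s
    have h5 : (Rvec f (piUp θ i x')
        + γ • (Mmat P (piUp θ i x') *ᵥ Vvec γ P f (piUp θ i (θ i)))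
        - Vvec γ P f (piUp θ i (θ i))) s
        = Rvec f (piUp θ i x') s
          + γ * ((Mmat P (piUp θ i x') *ᵥ Vvec γ P f (piUp θ i (θ i)))) s
          - Vvec γ P f (piUp θ i (θ i)) s := by
      simp [Pi.add_apply, Pi.sub_apply, Pi.smul_apply, smul_eq_mul]
    rw [h5]
    linarith
  have hMnn : ∀ s s', 0 ≤ (γ • Mmat P (piUp θ i x')) s s' := by
    intro s s'
    rw [Matrix.smul_apply, smul_eq_mul]
    exact mul_nonneg hγ0
      (Finset.sum_nonneg fun a _ => mul_nonneg (hπnn s a) (hPnn s a s'))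
  have hWnn : ∀ s s', 0 ≤ Wmat γ P (piUp θ i x') s s' := fun s s' =>
    inverse_entry_nonneg _ hMnn hn' s s'
  have hdot : ρ ⬝ᵥ (Vvec γ P f (piUp θ i x') - Vvec γ P f (piUp θ i (θ i))) ≤ 0 := by
    rw [hVdiff]
    show (∑ s, ρ s * (Wmat γ P (piUp θ i x') *ᵥ _) s) ≤ 0
    refine Finset.sum_nonpos fun s _ => ?_
    refine mul_nonpos_of_nonneg_of_nonpos (hρ s) ?_
    show (∑ s', Wmat γ P (piUp θ i x') s s' * _) ≤ 0
    exact Finset.sum_nonpos fun s' _ =>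
      mul_nonpos_of_nonneg_of_nonpos (hWnn s s') (hwv_le s')
  rw [dotProduct_sub] at hdot
  linarith


end GameAux

/-- Under Assumption 1 (positive discounted state-visitation
measure everywhere), every first-order stationary policy of a finite Markov
game under direct policy parameterization is a Nash equilibrium. -/
theorem first_order_stationary_is_nash_equilibrium
    {N : ℕ} {S : Type} {A : Fin N → Type}
    [Fintype S] [DecidableEq S] [Nonempty S]
    [∀ i, Fintype (A i)] [∀ i, Nonempty (A i)]
    (γ : ℝ) (hγ0 : 0 ≤ γ) (hγ1 : γ < 1)
    (P : S → (∀ i, A i) → S → ℝ) (hP : ∀ s a, P s a ∈ stdSimplex ℝ S)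
    (r : Fin N → S → (∀ i, A i) → ℝ)
    (ρ : S → ℝ) (hρ : ρ ∈ stdSimplex ℝ S)
    -- Assumption 1 : d_θ(s) > 0 for all s and all feasible θ
    (hA1 : ∀ ϑ : ∀ i, S → A i → ℝ, feasible ϑ → ∀ s : S, 0 < visit γ P ϑ ρ s)
    (θ : ∀ i, S → A i → ℝ) (hθ : feasible θ)
    -- θ is a first-order stationary policy:
    (hstat : ∀ i : Fin N, ∀ θi' : S → A i → ℝ,
      (∀ s, θi' s ∈ stdSimplex ℝ (A i)) →
      fderiv ℝ (fun x : S → A i → ℝ =>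
          Jtot γ P ρ (Function.update θ i x) (r i)) (θ i) (θi' - θ i) ≤ 0) :
    -- θ is a Nash equilibrium:
    ∀ i : Fin N, ∀ θi' : S → A i → ℝ,
      (∀ s, θi' s ∈ stdSimplex ℝ (A i)) →
      Jtot γ P ρ (Function.update θ i θi') (r i) ≤ Jtot γ P ρ θ (r i) := by
  classical
  intro i θi' hθi'
  have hργ : (0 : ℝ) < 1 - γ := by linarith
  -- feasibility of updated profiles
  have hupd : ∀ x : S → A i → ℝ, (∀ s, x s ∈ stdSimplex ℝ (A i)) →
      feasible (Function.update θ i x) := by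
    intro x hx j s
    by_cases hj : j = i
    · subst hj; rw [Function.update_self]; exact hx s
    · rw [Function.update_of_ne hj]; exact hθ j s
  have hPiUp : ∀ x : S → A i → ℝ, (∀ s, x s ∈ stdSimplex ℝ (A i)) →
      ∀ s, piUp θ i x s ∈ stdSimplex ℝ (∀ j, A j) := by
    intro x hx s
    rw [← jointPi_update]
    exact jointPi_mem _ (hupd x hx) s
  have hnorm : ∀ x : S → A i → ℝ, (∀ s, x s ∈ stdSimplex ℝ (A i)) →
      ‖γ • Mmat P (piUp θ i x)‖ < 1 := fun x hx =>
    norm_smul_Mmat_lt γ hγ0 hγ1 P hP _ (hPiUp x hx)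
  have hnθ : ‖γ • Mmat P (piUp θ i (θ i))‖ < 1 := hnorm (θ i) (hθ i)
  -- the objective agrees with its closed form wherever the norm bound holds
  have hFG : ∀ x : S → A i → ℝ, ‖γ • Mmat P (piUp θ i x)‖ < 1 →
      Jtot γ P ρ (Function.update θ i x) (r i) = Gfun γ P (r i) θ i ρ x := by
    intro x hx
    show expDisc γ P (jointPi (Function.update θ i x)) ρ (r i)
      = BC ρ (Ring.inverse ((1 : Matrix S S ℝ) - γ • Mmat P (piUp θ i x)))
          (Rvec (r i) (piUp θ i x))
    rw [jointPi_update, BC_apply]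
    exact expDisc_eq γ P (piUp θ i x) ρ (r i) hx
  -- transfer of the derivative
  have hopen : IsOpen {x : S → A i → ℝ | ‖γ • Mmat P (piUp θ i x)‖ < 1} := by
    have hcont : Continuous fun x : S → A i → ℝ => ‖γ • Mmat P (piUp θ i x)‖ := by
      have h1 : Continuous fun x : S → A i → ℝ =>
          (LinearMap.toContinuousLinearMap (LmL P θ i)) x :=
        (LinearMap.toContinuousLinearMap (LmL P θ i)).continuous
      exact (h1.const_smul γ).norm
    exact isOpen_lt hcont continuous_const
  have hmem : (fun x : S → A i → ℝ => Jtot γ P ρ (Function.update θ i x) (r i))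
      =ᶠ[nhds (θ i)] Gfun γ P (r i) θ i ρ := by
    filter_upwards [hopen.mem_nhds hnθ] with x hx
    exact hFG x hx
  have hfde : fderiv ℝ
        (fun x : S → A i → ℝ => Jtot γ P ρ (Function.update θ i x) (r i)) (θ i)
      = fderiv ℝ (Gfun γ P (r i) θ i ρ) (θ i) := hmem.fderiv_eq
  -- the visitation row vector and its positivity
  have hdv_row : ∀ s, (ρ ᵥ* Wmat γ P (piUp θ i (θ i))) s = visit γ P θ ρ s / (1 - γ) := by
    intro s
    have h1 : ‖γ • Mmat P (jointPi θ)‖ < 1 := by rw [← piUp_self θ i]; exact hnθ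
    have h2 := visit_closed γ P ρ θ h1 s
    have h3 : ρ ⬝ᵥ Wmat γ P (jointPi θ) *ᵥ Pi.single s 1
        = (ρ ᵥ* Wmat γ P (jointPi θ)) s := by
      rw [Matrix.dotProduct_mulVec, dotProduct_single, mul_one]
    rw [piUp_self θ i, h2, h3, mul_div_cancel_left₀ _ (ne_of_gt hργ)]
  have hdvpos : ∀ s, 0 < (ρ ᵥ* Wmat γ P (piUp θ i (θ i))) s := by
    intro s; rw [hdv_row s]; exact div_pos (hA1 θ hθ s) hργ
  -- the derivative as a weighted sum
  have hDu : ∀ u : S → A i → ℝ,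
      fderiv ℝ (fun x : S → A i → ℝ => Jtot γ P ρ (Function.update θ i x) (r i)) (θ i) u
        = ∑ s, (ρ ᵥ* Wmat γ P (piUp θ i (θ i))) s *
            (∑ a, piUp θ i u s a * Qfun γ P (r i) θ i s a) := by
    intro u
    rw [hfde, deriv_formula γ P (r i) θ i ρ hnθ u, Matrix.dotProduct_mulVec]
    rfl
  -- Bellman equation
  have hBell : ∀ s, Vvec γ P (r i) (piUp θ i (θ i)) s
      = ∑ a, piUp θ i (θ i) s a * Qfun γ P (r i) θ i s a :=
    bellman γ P (r i) θ i hnθ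
  -- stationarity implies pointwise optimality of the base policy
  have hkey : ∀ s₀ : S, ∀ b₀ : A i,
      (∑ a, piUp θ i (Function.update (θ i) s₀ (fun b => if b = b₀ then (1 : ℝ) else 0)) s₀ a
        * Qfun γ P (r i) θ i s₀ a) ≤ Vvec γ P (r i) (piUp θ i (θ i)) s₀ := by
    intro s₀ b₀
    set w₀ : A i → ℝ := fun b => if b = b₀ then 1 else 0 with hw₀
    have hw₀std : w₀ ∈ stdSimplex ℝ (A i) := by
      constructor
      · intro b; rw [hw₀]; dsimp only; split <;> norm_num
      · rw [hw₀]; simp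
    have hx'std : ∀ s, Function.update (θ i) s₀ w₀ s ∈ stdSimplex ℝ (A i) := by
      intro s
      by_cases hs : s = s₀
      · subst hs; rw [Function.update_self]; exact hw₀std
      · rw [Function.update_of_ne hs]; exact hθ i s
    have hst := hstat i (Function.update (θ i) s₀ w₀) hx'std
    rw [hDu] at hst
    have hterm : ∀ s,
        (∑ a, piUp θ i (Function.update (θ i) s₀ w₀ - θ i) s a * Qfun γ P (r i) θ i s a)
          = (∑ a, piUp θ i (Function.update (θ i) s₀ w₀) s a * Qfun γ P (r i) θ i s a)
            - (∑ a, piUp θ i (θ i) s a * Qfun γ P (r i) θ i s a) := by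
      intro s
      rw [← Finset.sum_sub_distrib]
      refine Finset.sum_congr rfl fun a _ => ?_
      have : piUp θ i (Function.update (θ i) s₀ w₀ - θ i) s a
          = piUp θ i (Function.update (θ i) s₀ w₀) s a - piUp θ i (θ i) s a := by
        show (Function.update (θ i) s₀ w₀ - θ i) s (a i) * cprod θ i s a = _
        rw [Pi.sub_apply, Pi.sub_apply, sub_mul]
        rfl
      rw [this, sub_mul]
    have hsum_eq :
        (∑ s, (ρ ᵥ* Wmat γ P (piUp θ i (θ i))) s *
          (∑ a, piUp θ i (Function.update (θ i) s₀ w₀ - θ i) s a * Qfun γ P (r i) θ i s a))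
        = (ρ ᵥ* Wmat γ P (piUp θ i (θ i))) s₀ *
            ((∑ a, piUp θ i (Function.update (θ i) s₀ w₀) s₀ a * Qfun γ P (r i) θ i s₀ a)
              - (∑ a, piUp θ i (θ i) s₀ a * Qfun γ P (r i) θ i s₀ a)) := by
      rw [Finset.sum_eq_single s₀]
      · rw [hterm s₀]
      · intro s _ hs
        rw [hterm s]
        have heq : piUp θ i (Function.update (θ i) s₀ w₀) s = piUp θ i (θ i) s := by
          funext a
          show (Function.update (θ i) s₀ w₀) s (a i) * cprod θ i s a = _
          rw [Function.update_of_ne hs]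
          rfl
        rw [heq, sub_self, mul_zero]
      · intro hmm; exact absurd (Finset.mem_univ s₀) hmm
    rw [hsum_eq] at hst
    rw [← hBell s₀] at hst
    by_contra hlt
    push_neg at hlt
    nlinarith [hdvpos s₀]
  -- clean form of the key inequality
  have hkey' : ∀ s : S, ∀ b : A i,
      (∑ a, (if a i = b then (1 : ℝ) else 0) * cprod θ i s a * Qfun γ P (r i) θ i s a)
        ≤ Vvec γ P (r i) (piUp θ i (θ i)) s := by
    intro s b
    refine le_trans (le_of_eq ?_) (hkey s b)
    refine Finset.sum_congr rfl fun a _ => ?_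
    have : piUp θ i (Function.update (θ i) s fun b' => if b' = b then (1 : ℝ) else 0) s a
        = (if a i = b then (1 : ℝ) else 0) * cprod θ i s a := by
      show (Function.update (θ i) s fun b' => if b' = b then (1 : ℝ) else 0) s (a i)
          * cprod θ i s a = _
      rw [Function.update_self]
    rw [this]
  -- optimality against any feasible one-shot deviation
  have hTle : ∀ s, (∑ a, piUp θ i θi' s a * Qfun γ P (r i) θ i s a)
      ≤ Vvec γ P (r i) (piUp θ i (θ i)) s := by
    intro s
    have hdecomp : (∑ a, piUp θ i θi' s a * Qfun γ P (r i) θ i s a)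
        = ∑ b, θi' s b *
            (∑ a, (if a i = b then (1 : ℝ) else 0) * cprod θ i s a * Qfun γ P (r i) θ i s a) := by
      calc ∑ a, piUp θ i θi' s a * Qfun γ P (r i) θ i s a
          = ∑ a, ∑ b, (if a i = b
              then θi' s b * (cprod θ i s a * Qfun γ P (r i) θ i s a) else 0) := by
            refine Finset.sum_congr rfl fun a _ => ?_
            rw [Finset.sum_ite_eq]
            simp [piUp, mul_assoc]
        _ = ∑ b, ∑ a, (if a i = b
              then θi' s b * (cprod θ i s a * Qfun γ P (r i) θ i s a) else 0) :=
            Finset.sum_comm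
        _ = ∑ b, θi' s b *
              (∑ a, (if a i = b then (1 : ℝ) else 0) * cprod θ i s a
                * Qfun γ P (r i) θ i s a) := by
            refine Finset.sum_congr rfl fun b _ => ?_
            rw [Finset.mul_sum]
            refine Finset.sum_congr rfl fun a _ => ?_
            by_cases hab : a i = b <;> simp [hab] <;> ring
    rw [hdecomp]
    calc ∑ b, θi' s b *
          (∑ a, (if a i = b then (1 : ℝ) else 0) * cprod θ i s a * Qfun γ P (r i) θ i s a)
        ≤ ∑ b, θi' s b * Vvec γ P (r i) (piUp θ i (θ i)) s :=
          Finset.sum_le_sum fun b _ =>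
            mul_le_mul_of_nonneg_left (hkey' s b) ((hθi' s).1 b)
      _ = Vvec γ P (r i) (piUp θ i (θ i)) s := by
          rw [← Finset.sum_mul, (hθi' s).2, one_mul]
  -- performance difference argument
  have hn' : ‖γ • Mmat P (piUp θ i θi')‖ < 1 := hnorm θi' hθi'
  have hfinal := pdl γ P (r i) θ i ρ hγ0 (fun s => hρ.1 s) θi' hn'
    (fun s a s' => (hP s a).1 s') (fun s a => (hPiUp θi' hθi' s).1 a) hTle
  have hL : Jtot γ P ρ (Function.update θ i θi') (r i)
      = ρ ⬝ᵥ Vvec γ P (r i) (piUp θ i θi') := by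
    rw [hFG θi' hn', Gfun_eq]
  have hR : Jtot γ P ρ θ (r i) = ρ ⬝ᵥ Vvec γ P (r i) (piUp θ i (θ i)) := by
    conv_lhs => rw [← Function.update_eq_self i θ]
    rw [hFG (θ i) hnθ, Gfun_eq]
  rw [hL, hR]
  exact hfinal

end NashAux
end

section
/- (Gradient domination) For a finite Markov game under direct policy parameterization satisfying Assumption 1, for every θ = (θ_1,…,θ_N) ∈ X, every agent i, and every θ_i' ∈ X_i, writing θ' = (θ_i', θ_{-i}), one has J_i(θ_i', θ_{-i}) − J_i(θ_i, θ_{-i}) ≤ ‖d_{θ'}/d_θ‖_∞ · max_{θ̄_i ∈ X_i} (θ̄_i − θ_i)ᵀ ∇_{θ_i} J_i(θ), where ‖d_{θ'}/d_θ‖_∞ := max_{s ∈ S} d_{θ'}(s)/d_θ(s). -/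
open scoped BigOperators

set_option linter.unusedSectionVars false
set_option synthInstance.maxHeartbeats 1000000
set_option maxHeartbeats 1000000

section OpLayer
variable {σ α : Type} [Fintype σ] [Fintype α]

/-- The averaged transition operator as a continuous linear map on `σ → ℝ`. -/
noncomputable def Lop (P : σ → α → σ → ℝ) (π : σ → α → ℝ) : (σ → ℝ) →L[ℝ] (σ → ℝ) :=
  LinearMap.toContinuousLinearMap
  { toFun := fun v s => ∑ a, π s a * ∑ s', P s a s' * v s'
    map_add' := by
      intro u v; funext s
      simp only [Pi.add_apply, mul_add, add_mul, Finset.sum_add_distrib]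
    map_smul' := by
      intro c v; funext s
      simp only [Pi.smul_apply, smul_eq_mul, RingHom.id_apply, Finset.mul_sum]
      exact Finset.sum_congr rfl fun a _ => Finset.sum_congr rfl fun s' _ => by ring }

@[simp] lemma Lop_apply (P : σ → α → σ → ℝ) (π : σ → α → ℝ) (v : σ → ℝ) (s : σ) :
    Lop P π v s = ∑ a, π s a * ∑ s', P s a s' * v s' := rfl

/-- Integration against `ρ` as a continuous linear functional. -/
noncomputable def Phi (ρ : σ → ℝ) : (σ → ℝ) →L[ℝ] ℝ :=
  LinearMap.toContinuousLinearMap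
  { toFun := fun v => ∑ s, ρ s * v s
    map_add' := by intro u v; simp [mul_add, Finset.sum_add_distrib]
    map_smul' := by
      intro c v
      simp only [Pi.smul_apply, smul_eq_mul, RingHom.id_apply, Finset.mul_sum]
      exact Finset.sum_congr rfl fun s _ => by ring }

@[simp] lemma Phi_apply (ρ v : σ → ℝ) : Phi ρ v = ∑ s, ρ s * v s := rfl

lemma stateDist_succ_dual (P : σ → α → σ → ℝ) (π : σ → α → ℝ) (ρ : σ → ℝ) (t : ℕ) (v : σ → ℝ) :
    ∑ s, stateDist P π ρ (t+1) s * v s = ∑ s, stateDist P π ρ t s * Lop P π v s := by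
  simp only [stateDist, Lop_apply, Finset.sum_mul, Finset.mul_sum]
  rw [Finset.sum_comm]
  refine Finset.sum_congr rfl fun s _ => ?_
  rw [Finset.sum_comm]
  exact Finset.sum_congr rfl fun a _ => Finset.sum_congr rfl fun s' _ => by ring

lemma stateDist_dual (P : σ → α → σ → ℝ) (π : σ → α → ℝ) (ρ : σ → ℝ) (t : ℕ) (v : σ → ℝ) :
    ∑ s, stateDist P π ρ t s * v s = Phi ρ ((Lop P π ^ t) v) := by
  induction t generalizing v with
  | zero => simp [stateDist]
  | succ t ih =>
      rw [stateDist_succ_dual, ih, pow_succ, ContinuousLinearMap.mul_apply]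

lemma pow_opNorm_le_one {E : Type*} [NormedAddCommGroup E] [NormedSpace ℝ E]
    (A : E →L[ℝ] E) (h : ‖A‖ ≤ 1) (t : ℕ) : ‖A ^ t‖ ≤ 1 := by
  induction t with
  | zero => simpa [ContinuousLinearMap.one_def] using ContinuousLinearMap.norm_id_le
  | succ t ih =>
      calc ‖A ^ (t+1)‖ = ‖A ^ t * A‖ := by rw [pow_succ]
        _ ≤ ‖A ^ t‖ * ‖A‖ := norm_mul_le _ _
        _ ≤ 1 * 1 := by
            have := norm_nonneg (A ^ t)
            have := norm_nonneg A
            nlinarith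
        _ = 1 := one_mul 1

lemma stateDist_norm_le [DecidableEq σ] (P : σ → α → σ → ℝ) (π : σ → α → ℝ) (ρ : σ → ℝ)
    (hL : ‖Lop P π‖ ≤ 1) (t : ℕ) (s : σ) :
    |stateDist P π ρ t s| ≤ ‖Phi ρ‖ := by
  have h := stateDist_dual P π ρ t (fun s' => if s' = s then 1 else 0)
  have hs : ∑ s', stateDist P π ρ t s' * (if s' = s then (1:ℝ) else 0) = stateDist P π ρ t s := by
    simp [Finset.sum_ite_eq]
  rw [hs] at h
  rw [h]
  have hpow : ‖Lop P π ^ t‖ ≤ 1 := pow_opNorm_le_one _ hL t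
  have he : ‖fun s' => if s' = s then (1:ℝ) else 0‖ ≤ 1 := by
    rw [pi_norm_le_iff_of_nonneg zero_le_one]
    intro s'
    rw [Real.norm_eq_abs]
    split <;> simp
  calc |Phi ρ ((Lop P π ^ t) fun s' => if s' = s then 1 else 0)|
      ≤ ‖Phi ρ‖ * ‖(Lop P π ^ t) fun s' => if s' = s then (1:ℝ) else 0‖ :=
        (Phi ρ).le_opNorm _
    _ ≤ ‖Phi ρ‖ * (‖Lop P π ^ t‖ * ‖fun s' => if s' = s then (1:ℝ) else 0‖) := by
        have := (Lop P π ^ t).le_opNorm (fun s' => if s' = s then (1:ℝ) else 0)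
        nlinarith [norm_nonneg (Phi ρ), norm_nonneg ((Lop P π ^ t) fun s' => if s' = s then (1:ℝ) else 0)]
    _ ≤ ‖Phi ρ‖ * (1 * 1) :=
        mul_le_mul_of_nonneg_left
          (by
            have h1 := norm_nonneg (fun s' => if s' = s then (1:ℝ) else 0)
            exact mul_le_mul hpow he h1 zero_le_one)
          (norm_nonneg _)
    _ = ‖Phi ρ‖ := by ring

end OpLayer

section OpLayer2
variable {σ α : Type} [Fintype σ] [Fintype α]

lemma tsum_phi_geom (ρ : σ → ℝ) (B : (σ → ℝ) →L[ℝ] (σ → ℝ)) (hB : ‖B‖ < 1) (w : σ → ℝ) :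
    ∑' t : ℕ, Phi ρ ((B ^ t) w) = Phi ρ (Ring.inverse (1 - B) w) := by
  have h1 : HasSum (fun t : ℕ => B ^ t) (Ring.inverse (1 - B)) := hasSum_geom_series_inverse B hB
  have h2 := h1.mapL (ContinuousLinearMap.apply ℝ (σ → ℝ) w)
  have h3 := h2.mapL (Phi ρ)
  simpa using h3.tsum_eq

lemma expDisc_eq_inverse (γ : ℝ) (P : σ → α → σ → ℝ) (π : σ → α → ℝ) (ρ : σ → ℝ)
    (h : ‖γ • Lop P π‖ < 1) (f : σ → α → ℝ) :
    expDisc γ P π ρ f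
      = Phi ρ (Ring.inverse (1 - γ • Lop P π) (fun s => ∑ a, π s a * f s a)) := by
  have key : ∀ t : ℕ, γ ^ t * ∑ s, ∑ a, stateDist P π ρ t s * π s a * f s a
      = Phi ρ (((γ • Lop P π) ^ t) (fun s => ∑ a, π s a * f s a)) := by
    intro t
    have hinner : ∀ s : σ, ∑ a, stateDist P π ρ t s * π s a * f s a
        = stateDist P π ρ t s * ∑ a, π s a * f s a := by
      intro s; rw [Finset.mul_sum]; exact Finset.sum_congr rfl fun a _ => by ring
    calc γ ^ t * ∑ s, ∑ a, stateDist P π ρ t s * π s a * f s a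
        = γ ^ t * ∑ s, stateDist P π ρ t s * ∑ a, π s a * f s a := by
          rw [Finset.sum_congr rfl fun s _ => hinner s]
      _ = γ ^ t * Phi ρ ((Lop P π ^ t) fun s => ∑ a, π s a * f s a) := by
          rw [stateDist_dual]
      _ = Phi ρ (((γ • Lop P π) ^ t) fun s => ∑ a, π s a * f s a) := by
          rw [smul_pow, ContinuousLinearMap.smul_apply, map_smul, smul_eq_mul]
  rw [expDisc, tsum_congr key]
  exact tsum_phi_geom ρ _ h _

lemma norm_Lop_le_one (P : σ → α → σ → ℝ) (hP : ∀ s a, P s a ∈ stdSimplex ℝ σ)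
    (π : σ → α → ℝ) (hπ0 : ∀ s a, 0 ≤ π s a) (hπ1 : ∀ s, ∑ a, π s a = 1) :
    ‖Lop P π‖ ≤ 1 := by
  refine ContinuousLinearMap.opNorm_le_bound _ zero_le_one fun v => ?_
  rw [one_mul, pi_norm_le_iff_of_nonneg (norm_nonneg v)]
  intro s
  rw [Real.norm_eq_abs, Lop_apply]
  have hinner : ∀ a, |∑ s', P s a s' * v s'| ≤ ‖v‖ := by
    intro a
    calc |∑ s', P s a s' * v s'| ≤ ∑ s', |P s a s' * v s'| := Finset.abs_sum_le_sum_abs _ _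
      _ ≤ ∑ s', P s a s' * ‖v‖ := by
          refine Finset.sum_le_sum fun s' _ => ?_
          rw [abs_mul, abs_of_nonneg ((hP s a).1 s')]
          exact mul_le_mul_of_nonneg_left
            (by rw [← Real.norm_eq_abs]; exact norm_le_pi_norm v s') ((hP s a).1 s')
      _ = ‖v‖ := by rw [← Finset.sum_mul, (hP s a).2, one_mul]
  calc |∑ a, π s a * ∑ s', P s a s' * v s'|
      ≤ ∑ a, |π s a * ∑ s', P s a s' * v s'| := Finset.abs_sum_le_sum_abs _ _
    _ ≤ ∑ a, π s a * ‖v‖ := by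
        refine Finset.sum_le_sum fun a _ => ?_
        rw [abs_mul, abs_of_nonneg (hπ0 s a)]
        exact mul_le_mul_of_nonneg_left (hinner a) (hπ0 s a)
    _ = ‖v‖ := by rw [← Finset.sum_mul, hπ1 s, one_mul]

lemma sum_visit_mul [DecidableEq σ] (γ : ℝ) (hγ0 : 0 ≤ γ) (hγ1 : γ < 1)
    (P : σ → α → σ → ℝ) (π : σ → α → ℝ) (ρ : σ → ℝ)
    (hL : ‖Lop P π‖ ≤ 1) (hB : ‖γ • Lop P π‖ < 1) (w : σ → ℝ) :
    ∑ s, ((1 - γ) * ∑' t : ℕ, γ ^ t * stateDist P π ρ t s) * w s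
      = (1 - γ) * Phi ρ (Ring.inverse (1 - γ • Lop P π) w) := by
  have hsum : ∀ s : σ, Summable (fun t : ℕ => γ ^ t * stateDist P π ρ t s * w s) := by
    intro s
    apply Summable.of_norm_bounded
      ((summable_geometric_of_lt_one hγ0 hγ1).mul_right (‖Phi ρ‖ * |w s|))
    intro t
    rw [Real.norm_eq_abs, abs_mul, abs_mul, abs_pow, abs_of_nonneg hγ0]
    have hds := stateDist_norm_le P π ρ hL t s
    have h1 : |stateDist P π ρ t s| * |w s| ≤ ‖Phi ρ‖ * |w s| :=
      mul_le_mul_of_nonneg_right hds (abs_nonneg _)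
    calc γ ^ t * |stateDist P π ρ t s| * |w s|
        = γ ^ t * (|stateDist P π ρ t s| * |w s|) := by ring
      _ ≤ γ ^ t * (‖Phi ρ‖ * |w s|) := mul_le_mul_of_nonneg_left h1 (by positivity)
  calc ∑ s, ((1 - γ) * ∑' t : ℕ, γ ^ t * stateDist P π ρ t s) * w s
      = (1 - γ) * ∑ s, ∑' t : ℕ, γ ^ t * stateDist P π ρ t s * w s := by
        rw [Finset.mul_sum]
        refine Finset.sum_congr rfl fun s _ => ?_
        rw [mul_assoc, ← tsum_mul_right]
    _ = (1 - γ) * ∑' t : ℕ, ∑ s, γ ^ t * stateDist P π ρ t s * w s := by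
        rw [Summable.tsum_finsetSum fun s _ => hsum s]
    _ = (1 - γ) * ∑' t : ℕ, Phi ρ (((γ • Lop P π) ^ t) w) := by
        congr 1
        refine tsum_congr fun t => ?_
        have : ∑ s, γ ^ t * stateDist P π ρ t s * w s
            = γ ^ t * ∑ s, stateDist P π ρ t s * w s := by
          rw [Finset.mul_sum]; exact Finset.sum_congr rfl fun s _ => by ring
        rw [this, stateDist_dual, smul_pow, ContinuousLinearMap.smul_apply, map_smul,
          smul_eq_mul]
    _ = (1 - γ) * Phi ρ (Ring.inverse (1 - γ • Lop P π) w) := by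
        rw [tsum_phi_geom ρ _ hB w]

end OpLayer2

section Game
variable {N : ℕ} {S : Type} {A : Fin N → Type}
variable [Fintype S] [∀ j, Fintype (A j)]

/-- Product of the policies of all agents other than `i`. -/
def Rprod (θ : ∀ j, S → A j → ℝ) (i : Fin N) (s : S) (a : ∀ j, A j) : ℝ :=
  ∏ j, if j = i then 1 else θ j s (a j)

lemma jointPi_update_eq (θ : ∀ j, S → A j → ℝ) (i : Fin N) (y : S → A i → ℝ)
    (s : S) (a : ∀ j, A j) :
    jointPi (Function.update θ i y) s a = y s (a i) * Rprod θ i s a := by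
  unfold jointPi Rprod
  rw [Finset.prod_eq_mul_prod_sdiff_singleton_of_mem (Finset.mem_univ i)
      (fun j => Function.update θ i y j s (a j)),
    Finset.prod_eq_mul_prod_sdiff_singleton_of_mem (Finset.mem_univ i)
      (fun j => if j = i then 1 else θ j s (a j))]
  rw [Function.update_self, if_pos rfl, one_mul]
  congr 1
  refine Finset.prod_congr rfl fun j hj => ?_
  have hji : j ≠ i := by
    rw [Finset.mem_sdiff, Finset.mem_singleton] at hj
    exact hj.2
  rw [Function.update_of_ne hji, if_neg hji]

def oneHot {S : Type} {β : Type} [DecidableEq β] (b : β) : S → β → ℝ :=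
  fun _ b' => if b' = b then 1 else 0

lemma oneHot_mem {β : Type} [Fintype β] [DecidableEq β] (b : β) (s : S) :
    oneHot (S := S) b s ∈ stdSimplex ℝ β := by
  constructor
  · intro b'; unfold oneHot; split <;> norm_num
  · unfold oneHot; rw [Finset.sum_ite_eq' Finset.univ b fun _ => (1:ℝ)]
    simp

lemma sum_jointPi_update_mul (θ : ∀ j, S → A j → ℝ) (i : Fin N) [DecidableEq (A i)]
    (y : S → A i → ℝ) (s : S) (X : (∀ j, A j) → ℝ) :
    ∑ a, jointPi (Function.update θ i y) s a * X a
      = ∑ b, y s b * ∑ a, jointPi (Function.update θ i (oneHot b)) s a * X a := by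
  simp only [jointPi_update_eq, oneHot]
  have hR : ∀ b : A i, y s b * ∑ a, (if a i = b then (1:ℝ) else 0) * Rprod θ i s a * X a
      = ∑ a, (if a i = b then y s b * (Rprod θ i s a * X a) else 0) := by
    intro b
    rw [Finset.mul_sum]
    exact Finset.sum_congr rfl fun a _ => by split <;> ring
  rw [Finset.sum_congr rfl fun b _ => hR b, Finset.sum_comm]
  refine Finset.sum_congr rfl fun a _ => ?_
  rw [Finset.sum_ite_eq Finset.univ (a i) fun b => y s b * (Rprod θ i s a * X a),
    if_pos (Finset.mem_univ _)]
  ring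

lemma jointPi_nonneg (θ : ∀ j, S → A j → ℝ) (hθ : feasible θ) (s : S) (a : ∀ j, A j) :
    0 ≤ jointPi θ s a :=
  Finset.prod_nonneg fun j _ => (hθ j s).1 (a j)

lemma sum_jointPi_eq_one (θ : ∀ j, S → A j → ℝ) (hθ : feasible θ) (s : S) :
    ∑ a, jointPi θ s a = 1 := by
  unfold jointPi
  rw [← Fintype.piFinset_univ, ← Finset.prod_univ_sum]
  exact Finset.prod_eq_one fun j _ => (hθ j s).2

lemma feasible_update (θ : ∀ j, S → A j → ℝ) (hθ : feasible θ) (i : Fin N)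
    (y : S → A i → ℝ) (hy : ∀ s, y s ∈ stdSimplex ℝ (A i)) :
    feasible (Function.update θ i y) := by
  intro j s
  rcases eq_or_ne j i with rfl | h
  · rw [Function.update_self]; exact hy s
  · rw [Function.update_of_ne h]; exact hθ j s

end Game

section Deriv
variable {N : ℕ} {S : Type} {A : Fin N → Type}
variable [Fintype S] [∀ j, Fintype (A j)]

noncomputable def LopPol (P : S → (∀ j, A j) → S → ℝ) (θ : ∀ j, S → A j → ℝ) (i : Fin N) :
    (S → A i → ℝ) →L[ℝ] ((S → ℝ) →L[ℝ] (S → ℝ)) :=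
  LinearMap.toContinuousLinearMap
  { toFun := fun y => Lop P (jointPi (Function.update θ i y))
    map_add' := by
      intro y z
      refine ContinuousLinearMap.ext fun v => funext fun s => ?_
      simp only [Lop_apply, jointPi_update_eq, ContinuousLinearMap.add_apply, Pi.add_apply]
      rw [← Finset.sum_add_distrib]
      exact Finset.sum_congr rfl fun a _ => by ring
    map_smul' := by
      intro c y
      refine ContinuousLinearMap.ext fun v => funext fun s => ?_
      simp only [Lop_apply, jointPi_update_eq, RingHom.id_apply,
        ContinuousLinearMap.smul_apply, Pi.smul_apply, smul_eq_mul, Finset.mul_sum]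
      exact Finset.sum_congr rfl fun a _ => Finset.sum_congr rfl fun x _ => by ring }

@[simp] lemma LopPol_apply (P : S → (∀ j, A j) → S → ℝ) (θ : ∀ j, S → A j → ℝ) (i : Fin N)
    (y : S → A i → ℝ) :
    LopPol P θ i y = Lop P (jointPi (Function.update θ i y)) := rfl

noncomputable def GvPol (θ : ∀ j, S → A j → ℝ) (i : Fin N) (f : S → (∀ j, A j) → ℝ) :
    (S → A i → ℝ) →L[ℝ] (S → ℝ) :=
  LinearMap.toContinuousLinearMap
  { toFun := fun y s => ∑ a, jointPi (Function.update θ i y) s a * f s a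
    map_add' := by
      intro y z
      funext s
      simp only [jointPi_update_eq, Pi.add_apply]
      rw [← Finset.sum_add_distrib]
      exact Finset.sum_congr rfl fun a _ => by ring
    map_smul' := by
      intro c y
      funext s
      simp only [jointPi_update_eq, RingHom.id_apply, Pi.smul_apply, smul_eq_mul,
        Finset.mul_sum]
      exact Finset.sum_congr rfl fun a _ => by ring }

@[simp] lemma GvPol_apply (θ : ∀ j, S → A j → ℝ) (i : Fin N) (f : S → (∀ j, A j) → ℝ)
    (y : S → A i → ℝ) :
    GvPol θ i f y = fun s => ∑ a, jointPi (Function.update θ i y) s a * f s a := rfl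

lemma Jtot_eq (γ : ℝ) (P : S → (∀ j, A j) → S → ℝ) (ρ : S → ℝ)
    (θ : ∀ j, S → A j → ℝ) (i : Fin N) (f : S → (∀ j, A j) → ℝ)
    (y : S → A i → ℝ) (h : ‖γ • LopPol P θ i y‖ < 1) :
    Jtot γ P ρ (Function.update θ i y) f
      = Phi ρ (Ring.inverse (1 - γ • LopPol P θ i y) (GvPol θ i f y)) :=
  expDisc_eq_inverse γ P _ ρ h f

lemma hasFDerivAt_Jtot (γ : ℝ) (P : S → (∀ j, A j) → S → ℝ) (ρ : S → ℝ)
    (θ : ∀ j, S → A j → ℝ) (i : Fin N) (f : S → (∀ j, A j) → ℝ)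
    (hT : ‖γ • LopPol P θ i (θ i)‖ < 1) :
    ∃ D : (S → A i → ℝ) →L[ℝ] ℝ,
      HasFDerivAt (fun y => Jtot γ P ρ (Function.update θ i y) f) D (θ i) ∧
      ∀ u, D u = Phi ρ (Ring.inverse (1 - γ • LopPol P θ i (θ i))
        (GvPol θ i f u + γ • (LopPol P θ i u)
          (Ring.inverse (1 - γ • LopPol P θ i (θ i)) (GvPol θ i f (θ i))))) := by
  set uT : ((S → ℝ) →L[ℝ] (S → ℝ))ˣ := Units.oneSub _ hT with huT
  have h1 : HasFDerivAt (fun y => 1 - γ • LopPol P θ i y) (-(γ • LopPol P θ i)) (θ i) := by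
    have h0 : HasFDerivAt (fun y => (γ • LopPol P θ i) y) (γ • LopPol P θ i) (θ i) :=
      (γ • LopPol P θ i).hasFDerivAt
    have := h0.const_sub 1
    simpa [ContinuousLinearMap.smul_apply] using this
  have h2 : HasFDerivAt (Ring.inverse : ((S → ℝ) →L[ℝ] (S → ℝ)) → _)
      (-(ContinuousLinearMap.mulLeftRight ℝ _ ↑uT⁻¹ ↑uT⁻¹)) ↑uT :=
    hasFDerivAt_ringInverse uT
  have huTval : (↑uT : (S → ℝ) →L[ℝ] (S → ℝ)) = 1 - γ • LopPol P θ i (θ i) := rfl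
  rw [huTval] at h2
  have h3 := h2.comp (θ i) h1
  have h4 : HasFDerivAt (fun y => GvPol θ i f y) (GvPol θ i f) (θ i) :=
    (GvPol θ i f).hasFDerivAt
  have h5 := h3.clm_apply h4
  have h6 := (Phi ρ).hasFDerivAt.comp (θ i) h5
  have hcont : Continuous fun y : S → A i → ℝ => ‖γ • LopPol P θ i y‖ :=
    ((γ • LopPol P θ i).continuous).norm
  have hev : ∀ᶠ y in nhds (θ i), ‖γ • LopPol P θ i y‖ < 1 :=
    hcont.continuousAt.eventually_lt continuousAt_const hT
  have heq : (fun y => Jtot γ P ρ (Function.update θ i y) f)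
      =ᶠ[nhds (θ i)]
      (fun y => Phi ρ (Ring.inverse (1 - γ • LopPol P θ i y) (GvPol θ i f y))) :=
    hev.mono fun y hy => Jtot_eq γ P ρ θ i f y hy
  refine ⟨_, h6.congr_of_eventuallyEq heq, fun u => ?_⟩
  have hinv : (↑uT⁻¹ : (S → ℝ) →L[ℝ] (S → ℝ))
      = Ring.inverse (1 - γ • LopPol P θ i (θ i)) := by
    rw [← huTval, Ring.inverse_unit]
  simp only [ContinuousLinearMap.coe_comp', Function.comp_apply,
    ContinuousLinearMap.add_apply, ContinuousLinearMap.coe_comp,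
    ContinuousLinearMap.flip_apply, ContinuousLinearMap.comp_apply,
    ContinuousLinearMap.neg_apply, ContinuousLinearMap.mulLeftRight_apply,
    neg_neg, map_add, hinv]
  congr 1
  simp only [ContinuousLinearMap.neg_apply, ContinuousLinearMap.mul_apply,
    ContinuousLinearMap.smul_apply, map_neg, neg_neg]

end Deriv

section PD
variable {N : ℕ} {S : Type} {A : Fin N → Type}
variable [Fintype S] [∀ j, Fintype (A j)]

lemma perf_diff (γ : ℝ) (P : S → (∀ j, A j) → S → ℝ) (ρ : S → ℝ)
    (θ : ∀ j, S → A j → ℝ) (i : Fin N) (f : S → (∀ j, A j) → ℝ) (y' : S → A i → ℝ)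
    (hT : ‖γ • LopPol P θ i (θ i)‖ < 1) (hT' : ‖γ • LopPol P θ i y'‖ < 1) :
    Jtot γ P ρ (Function.update θ i y') f - Jtot γ P ρ (Function.update θ i (θ i)) f
      = Phi ρ (Ring.inverse (1 - γ • LopPol P θ i y')
          (GvPol θ i f (y' - θ i) + γ • (LopPol P θ i (y' - θ i))
            (Ring.inverse (1 - γ • LopPol P θ i (θ i)) (GvPol θ i f (θ i))))) := by
  set T : (S → ℝ) →L[ℝ] (S → ℝ) := 1 - γ • LopPol P θ i (θ i) with hTdef
  set T' : (S → ℝ) →L[ℝ] (S → ℝ) := 1 - γ • LopPol P θ i y' with hT'def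
  set V : S → ℝ := Ring.inverse T (GvPol θ i f (θ i)) with hVdef
  have hUT : IsUnit T := isUnit_one_sub_of_norm_lt_one hT
  have hUT' : IsUnit T' := isUnit_one_sub_of_norm_lt_one hT'
  have hTV : T V = GvPol θ i f (θ i) := by
    rw [hVdef, ← ContinuousLinearMap.mul_apply, Ring.mul_inverse_cancel _ hUT,
      ContinuousLinearMap.one_apply]
  have hbell : GvPol θ i f (θ i) = V - γ • (LopPol P θ i (θ i)) V := by
    rw [← hTV, hTdef]
    simp [ContinuousLinearMap.sub_apply, ContinuousLinearMap.one_apply,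
      ContinuousLinearMap.smul_apply]
  rw [Jtot_eq γ P ρ θ i f y' hT', Jtot_eq γ P ρ θ i f (θ i) hT, ← hTdef, ← hT'def, ← hVdef,
    ← map_sub]
  congr 1
  have hT'V : T' V = V - γ • (LopPol P θ i y') V := by
    rw [hT'def]
    simp [ContinuousLinearMap.sub_apply, ContinuousLinearMap.one_apply,
      ContinuousLinearMap.smul_apply]
  have hinvT'T' : Ring.inverse T' (T' V) = V := by
    rw [← ContinuousLinearMap.mul_apply, Ring.inverse_mul_cancel _ hUT',
      ContinuousLinearMap.one_apply]
  calc Ring.inverse T' (GvPol θ i f y') - V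
      = Ring.inverse T' (GvPol θ i f y') - Ring.inverse T' (T' V) := by rw [hinvT'T']
    _ = Ring.inverse T' (GvPol θ i f y' - T' V) := by rw [← map_sub]
    _ = Ring.inverse T' (GvPol θ i f (y' - θ i) + γ • (LopPol P θ i (y' - θ i)) V) := by
        congr 1
        rw [hT'V, map_sub (GvPol θ i f), map_sub (LopPol P θ i), hbell,
          ContinuousLinearMap.sub_apply]
        funext s
        simp only [Pi.sub_apply, Pi.add_apply, Pi.smul_apply, smul_eq_mul]
        ring

lemma q_eq (γ : ℝ) (P : S → (∀ j, A j) → S → ℝ) (θ : ∀ j, S → A j → ℝ) (i : Fin N)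
    [DecidableEq (A i)] (f : S → (∀ j, A j) → ℝ) (V : S → ℝ) (u : S → A i → ℝ) (s : S) :
    (GvPol θ i f u + γ • (LopPol P θ i u) V) s
      = ∑ b, u s b * ∑ a, jointPi (Function.update θ i (oneHot b)) s a *
          (f s a + γ * ∑ s', P s a s' * V s') := by
  have h1 : (GvPol θ i f u + γ • (LopPol P θ i u) V) s
      = ∑ a, jointPi (Function.update θ i u) s a *
          (f s a + γ * ∑ s', P s a s' * V s') := by
    simp only [Pi.add_apply, Pi.smul_apply, GvPol_apply, LopPol_apply, Lop_apply,
      smul_eq_mul, Finset.mul_sum]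
    rw [← Finset.sum_add_distrib]
    refine Finset.sum_congr rfl fun a _ => ?_
    rw [mul_add, Finset.mul_sum]
    congr 1
    exact Finset.sum_congr rfl fun x _ => by ring
  rw [h1]
  exact sum_jointPi_update_mul θ i u s _

lemma norm_gL_lt_one (γ : ℝ) (hγ0 : 0 ≤ γ) (hγ1 : γ < 1)
    (P : S → (∀ j, A j) → S → ℝ) (hP : ∀ s a, P s a ∈ stdSimplex ℝ S)
    (θ : ∀ j, S → A j → ℝ) (hθ : feasible θ) (i : Fin N)
    (y : S → A i → ℝ) (hy : ∀ s, y s ∈ stdSimplex ℝ (A i)) :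
    ‖γ • LopPol P θ i y‖ < 1 := by
  have hfe := feasible_update θ hθ i y hy
  have hL : ‖Lop P (jointPi (Function.update θ i y))‖ ≤ 1 :=
    norm_Lop_le_one P hP _ (fun s a => jointPi_nonneg _ hfe s a)
      (fun s => sum_jointPi_eq_one _ hfe s)
  calc ‖γ • LopPol P θ i y‖ = γ * ‖Lop P (jointPi (Function.update θ i y))‖ := by
        rw [norm_smul γ (LopPol P θ i y), Real.norm_eq_abs, abs_of_nonneg hγ0, LopPol_apply]
    _ ≤ γ * 1 := mul_le_mul_of_nonneg_left hL hγ0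
    _ < 1 := by linarith

end PD

/-- **Gradient domination.** For a finite Markov game under
direct policy parameterization satisfying Assumption 1, the improvement of a
unilateral deviation of agent `i` is bounded by the distribution-mismatch
coefficient `‖d_{θ'}/d_θ‖_∞` times the maximal feasible ascent direction of
agent `i`'s gradient. -/
theorem gradient_domination
    {N : ℕ} {S : Type} {A : Fin N → Type}
    [Fintype S] [DecidableEq S] [Nonempty S]
    [∀ i, Fintype (A i)] [∀ i, Nonempty (A i)]
    (γ : ℝ) (hγ0 : 0 ≤ γ) (hγ1 : γ < 1)
    (P : S → (∀ i, A i) → S → ℝ) (hP : ∀ s a, P s a ∈ stdSimplex ℝ S)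
    (r : Fin N → S → (∀ i, A i) → ℝ)
    (ρ : S → ℝ) (hρ : ρ ∈ stdSimplex ℝ S)
    -- Assumption 1 : d_θ(s) > 0 for all s and all feasible θ
    (hA1 : ∀ ϑ : ∀ i, S → A i → ℝ, feasible ϑ → ∀ s : S, 0 < visit γ P ϑ ρ s)
    (θ : ∀ i, S → A i → ℝ) (hθ : feasible θ)
    (i : Fin N) (θi' : S → A i → ℝ) (hθi' : ∀ s, θi' s ∈ stdSimplex ℝ (A i)) :
    Jtot γ P ρ (Function.update θ i θi') (r i) - Jtot γ P ρ θ (r i)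
      ≤ (Finset.univ.sup' Finset.univ_nonempty fun s : S =>
            visit γ P (Function.update θ i θi') ρ s / visit γ P θ ρ s)
        * sSup {x : ℝ | ∃ θb : S → A i → ℝ,
            (∀ s, θb s ∈ stdSimplex ℝ (A i)) ∧
            x = fderiv ℝ (fun y : S → A i → ℝ =>
                  Jtot γ P ρ (Function.update θ i y) (r i)) (θ i) (θb - θ i)} := by
  classical
  have hc : (0:ℝ) < 1 - γ := by linarith
  -- norm bounds for the two feasible policies
  have hTn : ‖γ • LopPol P θ i (θ i)‖ < 1 :=
    norm_gL_lt_one γ hγ0 hγ1 P hP θ hθ i (θ i) (hθ i)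
  have hT'n : ‖γ • LopPol P θ i θi'‖ < 1 :=
    norm_gL_lt_one γ hγ0 hγ1 P hP θ hθ i θi' hθi'
  -- the derivative
  obtain ⟨D, hD, hDval⟩ := hasFDerivAt_Jtot γ P ρ θ i (r i) hTn
  have hfd : fderiv ℝ (fun y => Jtot γ P ρ (Function.update θ i y) (r i)) (θ i) = D :=
    hD.fderiv
  set V : S → ℝ :=
    Ring.inverse (1 - γ • LopPol P θ i (θ i)) (GvPol θ i (r i) (θ i)) with hV
  set Qv : S → A i → ℝ := fun s b =>
    ∑ a, jointPi (Function.update θ i (oneHot b)) s a *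
      (r i s a + γ * ∑ s', P s a s' * V s') with hQv
  have hQ : ∀ (u : S → A i → ℝ) (s : S),
      (GvPol θ i (r i) u + γ • (LopPol P θ i u) V) s = ∑ b, u s b * Qv s b := by
    intro u s
    rw [q_eq γ P θ i (r i) V u s]
  -- argmax action in each state
  have hbmax : ∀ s : S, ∃ b : A i, ∀ b' : A i, Qv s b' ≤ Qv s b := by
    intro s
    obtain ⟨b, -, hb⟩ := Finset.exists_max_image Finset.univ (Qv s) Finset.univ_nonempty
    exact ⟨b, fun b' => hb b' (Finset.mem_univ b')⟩
  choose bst hbst using hbmax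
  set θstar : S → A i → ℝ := fun s => oneHot (S := S) (bst s) s with hθstar
  have hθstarmem : ∀ s, θstar s ∈ stdSimplex ℝ (A i) := fun s => oneHot_mem (bst s) s
  have hsimplex_le : ∀ (p : A i → ℝ), p ∈ stdSimplex ℝ (A i) → ∀ s,
      ∑ b, p b * Qv s b ≤ Qv s (bst s) := by
    intro p hp s
    calc ∑ b, p b * Qv s b ≤ ∑ b, p b * Qv s (bst s) :=
          Finset.sum_le_sum fun b _ => mul_le_mul_of_nonneg_left (hbst s b) (hp.1 b)
      _ = Qv s (bst s) := by rw [← Finset.sum_mul, hp.2, one_mul]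
  -- the two "advantage" vectors
  set q0 : S → ℝ := GvPol θ i (r i) (θi' - θ i) + γ • (LopPol P θ i (θi' - θ i)) V with hq0def
  set qs : S → ℝ :=
    GvPol θ i (r i) (θstar - θ i) + γ • (LopPol P θ i (θstar - θ i)) V with hqsdef
  have hq0 : ∀ s, q0 s = ∑ b, θi' s b * Qv s b - ∑ b, θ i s b * Qv s b := by
    intro s
    rw [hq0def, hQ (θi' - θ i) s, ← Finset.sum_sub_distrib]
    exact Finset.sum_congr rfl fun b _ => by simp only [Pi.sub_apply]; ring
  have hqs : ∀ s, qs s = Qv s (bst s) - ∑ b, θ i s b * Qv s b := by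
    intro s
    rw [hqsdef, hQ (θstar - θ i) s]
    have h1 : ∀ b, (θstar - θ i) s b * Qv s b
        = (if b = bst s then Qv s b else 0) - θ i s b * Qv s b := by
      intro b
      simp only [hθstar, Pi.sub_apply, oneHot]
      split <;> ring
    rw [Finset.sum_congr rfl fun b _ => h1 b, Finset.sum_sub_distrib,
      Finset.sum_ite_eq' Finset.univ (bst s) fun b => Qv s b, if_pos (Finset.mem_univ _)]
  have hq0_le_qs : ∀ s, q0 s ≤ qs s := by
    intro s
    rw [hq0 s, hqs s]
    have := hsimplex_le (θi' s) (hθi' s) s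
    linarith
  have hqs_nonneg : ∀ s, 0 ≤ qs s := by
    intro s
    rw [hqs s]
    have := hsimplex_le (θ i s) (hθ i s) s
    linarith
  -- visitation identities
  have hvisit : ∀ (y : S → A i → ℝ), (∀ s, y s ∈ stdSimplex ℝ (A i)) → ∀ w : S → ℝ,
      ∑ s, visit γ P (Function.update θ i y) ρ s * w s
        = (1 - γ) * Phi ρ (Ring.inverse (1 - γ • LopPol P θ i y) w) := by
    intro y hy w
    have hfe := feasible_update θ hθ i y hy
    have hL1 : ‖Lop P (jointPi (Function.update θ i y))‖ ≤ 1 :=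
      norm_Lop_le_one P hP _ (fun s a => jointPi_nonneg _ hfe s a)
        (fun s => sum_jointPi_eq_one _ hfe s)
    have hgl : ‖γ • Lop P (jointPi (Function.update θ i y))‖ < 1 :=
      norm_gL_lt_one γ hγ0 hγ1 P hP θ hθ i y hy
    exact sum_visit_mul γ hγ0 hγ1 P (jointPi (Function.update θ i y)) ρ hL1 hgl w
  have hvisitθ : ∀ w : S → ℝ, ∑ s, visit γ P θ ρ s * w s
      = (1 - γ) * Phi ρ (Ring.inverse (1 - γ • LopPol P θ i (θ i)) w) := by
    intro w
    have := hvisit (θ i) (hθ i) w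
    rwa [Function.update_eq_self i θ] at this
  -- performance difference
  have hPD : Jtot γ P ρ (Function.update θ i θi') (r i) - Jtot γ P ρ θ (r i)
      = Phi ρ (Ring.inverse (1 - γ • LopPol P θ i θi') q0) := by
    have h := perf_diff γ P ρ θ i (r i) θi' hTn hT'n
    rw [Function.update_eq_self i θ] at h
    exact h
  -- key scalar identities
  have e1 : (1 - γ) * (Jtot γ P ρ (Function.update θ i θi') (r i) - Jtot γ P ρ θ (r i))
      = ∑ s, visit γ P (Function.update θ i θi') ρ s * q0 s := by
    rw [hPD]
    exact (hvisit θi' hθi' q0).symm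
  have e2 : (1 - γ) * D (θstar - θ i) = ∑ s, visit γ P θ ρ s * qs s := by
    rw [hDval (θstar - θ i)]
    exact (hvisitθ qs).symm
  -- positivity of visitation measures
  have hdpos : ∀ s, 0 < visit γ P θ ρ s := hA1 θ hθ
  have hd'pos : ∀ s, 0 < visit γ P (Function.update θ i θi') ρ s :=
    hA1 _ (feasible_update θ hθ i θi' hθi')
  -- the mismatch coefficient
  have hCge : ∀ s, visit γ P (Function.update θ i θi') ρ s
      ≤ (Finset.univ.sup' Finset.univ_nonempty fun s : S =>
          visit γ P (Function.update θ i θi') ρ s / visit γ P θ ρ s) * visit γ P θ ρ s := by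
    intro s
    have h := Finset.le_sup' (b := s)
      (fun s : S => visit γ P (Function.update θ i θi') ρ s / visit γ P θ ρ s)
      (Finset.mem_univ s)
    exact (div_le_iff₀ (hdpos s)).1 h
  have hC0 : 0 ≤ Finset.univ.sup' Finset.univ_nonempty fun s : S =>
      visit γ P (Function.update θ i θi') ρ s / visit γ P θ ρ s := by
    obtain ⟨s0⟩ := (inferInstance : Nonempty S)
    refine le_trans (div_nonneg (hd'pos s0).le (hdpos s0).le) ?_
    exact Finset.le_sup'
      (f := fun s : S => visit γ P (Function.update θ i θi') ρ s / visit γ P θ ρ s)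
      (Finset.mem_univ s0)
  -- the sup of feasible ascent directions
  set Sset : Set ℝ := {x : ℝ | ∃ θb : S → A i → ℝ,
      (∀ s, θb s ∈ stdSimplex ℝ (A i)) ∧
      x = fderiv ℝ (fun y : S → A i → ℝ =>
            Jtot γ P ρ (Function.update θ i y) (r i)) (θ i) (θb - θ i)} with hSset
  have hmem : D (θstar - θ i) ∈ Sset := ⟨θstar, hθstarmem, by rw [hfd]⟩
  have hbdd : BddAbove Sset := by
    refine ⟨‖D‖ * (1 + ‖θ i‖), ?_⟩
    rintro x ⟨θc, hθc, rfl⟩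
    rw [hfd]
    have hnc : ‖θc‖ ≤ 1 := by
      rw [pi_norm_le_iff_of_nonneg zero_le_one]
      intro s
      rw [pi_norm_le_iff_of_nonneg zero_le_one]
      intro b
      rw [Real.norm_eq_abs, abs_of_nonneg ((hθc s).1 b)]
      calc θc s b ≤ ∑ b', θc s b' :=
            Finset.single_le_sum (fun b' _ => (hθc s).1 b') (Finset.mem_univ b)
        _ = 1 := (hθc s).2
    calc D (θc - θ i) ≤ |D (θc - θ i)| := le_abs_self _
      _ ≤ ‖D‖ * ‖θc - θ i‖ := by
          rw [← Real.norm_eq_abs]; exact D.le_opNorm _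
      _ ≤ ‖D‖ * (1 + ‖θ i‖) := by
          refine mul_le_mul_of_nonneg_left ?_ (norm_nonneg D)
          calc ‖θc - θ i‖ ≤ ‖θc‖ + ‖θ i‖ := norm_sub_le _ _
            _ ≤ 1 + ‖θ i‖ := by linarith
  have hsup : D (θstar - θ i) ≤ sSup Sset := le_csSup hbdd hmem
  -- final chain
  have key : (1 - γ) * (Jtot γ P ρ (Function.update θ i θi') (r i) - Jtot γ P ρ θ (r i))
      ≤ (1 - γ) * ((Finset.univ.sup' Finset.univ_nonempty fun s : S =>
          visit γ P (Function.update θ i θi') ρ s / visit γ P θ ρ s) * sSup Sset) := by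
    rw [e1]
    calc ∑ s, visit γ P (Function.update θ i θi') ρ s * q0 s
        ≤ ∑ s, visit γ P (Function.update θ i θi') ρ s * qs s :=
          Finset.sum_le_sum fun s _ =>
            mul_le_mul_of_nonneg_left (hq0_le_qs s) (hd'pos s).le
      _ ≤ ∑ s, (Finset.univ.sup' Finset.univ_nonempty fun s : S =>
            visit γ P (Function.update θ i θi') ρ s / visit γ P θ ρ s)
            * (visit γ P θ ρ s * qs s) := by
          refine Finset.sum_le_sum fun s _ => ?_
          have h1 := hCge s
          have h2 := hqs_nonneg s
          calc visit γ P (Function.update θ i θi') ρ s * qs s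
              ≤ ((Finset.univ.sup' Finset.univ_nonempty fun s : S =>
                  visit γ P (Function.update θ i θi') ρ s / visit γ P θ ρ s)
                  * visit γ P θ ρ s) * qs s := mul_le_mul_of_nonneg_right h1 h2
            _ = (Finset.univ.sup' Finset.univ_nonempty fun s : S =>
                  visit γ P (Function.update θ i θi') ρ s / visit γ P θ ρ s)
                  * (visit γ P θ ρ s * qs s) := by ring
      _ = (Finset.univ.sup' Finset.univ_nonempty fun s : S =>
            visit γ P (Function.update θ i θi') ρ s / visit γ P θ ρ s)
            * ∑ s, visit γ P θ ρ s * qs s := by rw [Finset.mul_sum]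
      _ = (Finset.univ.sup' Finset.univ_nonempty fun s : S =>
            visit γ P (Function.update θ i θi') ρ s / visit γ P θ ρ s)
            * ((1 - γ) * D (θstar - θ i)) := by rw [← e2]
      _ ≤ (Finset.univ.sup' Finset.univ_nonempty fun s : S =>
            visit γ P (Function.update θ i θi') ρ s / visit γ P θ ρ s)
            * ((1 - γ) * sSup Sset) := by
          refine mul_le_mul_of_nonneg_left ?_ hC0
          exact mul_le_mul_of_nonneg_left hsup hc.le
      _ = (1 - γ) * ((Finset.univ.sup' Finset.univ_nonempty fun s : S =>
            visit γ P (Function.update θ i θi') ρ s / visit γ P θ ρ s) * sSup Sset) := by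
          ring
  exact (mul_le_mul_iff_right₀ hc).1 key
end

section
/- For a Markov potential game, there is at least one global maximizer θ* of the total potential function Φ over X, i.e., θ* ∈ argmax_{θ ∈ X} Φ(θ), that is a pure (deterministic) Nash equilibrium: each π_{i,θ_i*}(·|s) puts probability 1 on a single action, and J_i(θ_i*, θ_{-i}*) ≥ J_i(θ_i', θ_{-i}*) for every θ_i' ∈ X_i and every agent i. -/
open scoped BigOperators

section MDPTheory
set_option linter.unusedSectionVars false

variable {σ α : Type} [Fintype σ] [Fintype α] [DecidableEq σ]

lemma sum_shuffle3 {β1 β2 β3 : Type} [Fintype β1] [Fintype β2] [Fintype β3]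
    (g : β1 → β2 → β3 → ℝ) :
    ∑ x : β1, ∑ y : β2, ∑ z : β3, g x y z = ∑ z, ∑ x, ∑ y, g x y z := by
  calc ∑ x, ∑ y, ∑ z, g x y z = ∑ x, ∑ z, ∑ y, g x y z :=
        Finset.sum_congr rfl fun x _ => Finset.sum_comm
    _ = ∑ z, ∑ x, ∑ y, g x y z := Finset.sum_comm

def stepDist (P : σ → α → σ → ℝ) (π : σ → α → ℝ) (ρ : σ → ℝ) : σ → ℝ :=
  fun s' => ∑ s, ∑ a, ρ s * π s a * P s a s'

lemma stateDist_succ (P : σ → α → σ → ℝ) (π : σ → α → ℝ) (ρ : σ → ℝ) (t : ℕ) :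
    stateDist P π ρ (t + 1)
      = fun s' => ∑ s, ∑ a, stateDist P π ρ t s * π s a * P s a s' := rfl

lemma stateDist_shift (P : σ → α → σ → ℝ) (π : σ → α → ℝ) (ρ : σ → ℝ) (t : ℕ) :
    stateDist P π ρ (t + 1) = stateDist P π (stepDist P π ρ) t := by
  induction t with
  | zero => rfl
  | succ t ih =>
      rw [stateDist_succ P π ρ (t + 1), ih, ← stateDist_succ]

lemma dirac_mem (s : σ) : dirac s ∈ stdSimplex ℝ σ := by
  constructor
  · intro s'; dsimp [dirac]; split <;> norm_num
  · simp [dirac]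

lemma stateDist_mem (P : σ → α → σ → ℝ) (hP : ∀ s a, P s a ∈ stdSimplex ℝ σ)
    (π : σ → α → ℝ) (hπ : ∀ s, π s ∈ stdSimplex ℝ α)
    (ρ : σ → ℝ) (hρ : ρ ∈ stdSimplex ℝ σ) (t : ℕ) :
    stateDist P π ρ t ∈ stdSimplex ℝ σ := by
  induction t with
  | zero => exact hρ
  | succ t ih =>
      constructor
      · intro s'
        refine Finset.sum_nonneg fun s _ => Finset.sum_nonneg fun a _ => ?_
        exact mul_nonneg (mul_nonneg (ih.1 s) ((hπ s).1 a)) ((hP s a).1 s')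
      · rw [stateDist_succ]
        calc ∑ s', ∑ s, ∑ a, stateDist P π ρ t s * π s a * P s a s'
            = ∑ s, ∑ a, ∑ s', stateDist P π ρ t s * π s a * P s a s' := by
              rw [← sum_shuffle3 fun s a s' => stateDist P π ρ t s * π s a * P s a s']
          _ = ∑ s, ∑ a, stateDist P π ρ t s * π s a := by
              refine Finset.sum_congr rfl fun s _ => Finset.sum_congr rfl fun a _ => ?_
              rw [← Finset.mul_sum, (hP s a).2, mul_one]
          _ = ∑ s, stateDist P π ρ t s := by
              refine Finset.sum_congr rfl fun s _ => ?_
              rw [← Finset.mul_sum, (hπ s).2, mul_one]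
          _ = 1 := ih.2

lemma absBound (P : σ → α → σ → ℝ) (hP : ∀ s a, P s a ∈ stdSimplex ℝ σ)
    (π : σ → α → ℝ) (hπ : ∀ s, π s ∈ stdSimplex ℝ α)
    (ρ : σ → ℝ) (hρ : ρ ∈ stdSimplex ℝ σ) (f : σ → α → ℝ) (t : ℕ) :
    |∑ s, ∑ a, stateDist P π ρ t s * π s a * f s a| ≤ ∑ s, ∑ a, |f s a| := by
  have hD := stateDist_mem P hP π hπ ρ hρ t
  have key : ∀ s a, |stateDist P π ρ t s * π s a * f s a| ≤ |f s a| := by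
    intro s a
    have h1 : stateDist P π ρ t s ≤ 1 :=
      hD.2 ▸ Finset.single_le_sum (fun i _ => hD.1 i) (Finset.mem_univ s)
    have h2 : π s a ≤ 1 :=
      (hπ s).2 ▸ Finset.single_le_sum (fun b _ => (hπ s).1 b) (Finset.mem_univ a)
    rw [abs_mul, abs_mul, abs_of_nonneg (hD.1 s), abs_of_nonneg ((hπ s).1 a)]
    calc stateDist P π ρ t s * π s a * |f s a| ≤ 1 * |f s a| :=
          mul_le_mul_of_nonneg_right
            (mul_le_one₀ h1 ((hπ s).1 a) h2) (abs_nonneg _)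
      _ = |f s a| := one_mul _
  exact (Finset.abs_sum_le_sum_abs _ _).trans (Finset.sum_le_sum fun s _ =>
    (Finset.abs_sum_le_sum_abs _ _).trans (Finset.sum_le_sum fun a _ => key s a))

lemma expDisc_summable {γ : ℝ} (hγ0 : 0 ≤ γ) (hγ1 : γ < 1)
    (P : σ → α → σ → ℝ) (hP : ∀ s a, P s a ∈ stdSimplex ℝ σ)
    (π : σ → α → ℝ) (hπ : ∀ s, π s ∈ stdSimplex ℝ α)
    (ρ : σ → ℝ) (hρ : ρ ∈ stdSimplex ℝ σ) (f : σ → α → ℝ) :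
    Summable (fun t : ℕ => γ ^ t * ∑ s, ∑ a, stateDist P π ρ t s * π s a * f s a) := by
  refine Summable.of_norm_bounded
    ((summable_geometric_of_lt_one hγ0 hγ1).mul_left (∑ s, ∑ a, |f s a|)) (fun t => ?_)
  rw [norm_mul, norm_pow, Real.norm_eq_abs, Real.norm_eq_abs, abs_of_nonneg hγ0, mul_comm]
  exact mul_le_mul_of_nonneg_right (absBound P hP π hπ ρ hρ f t) (pow_nonneg hγ0 t)

lemma stepDist_mem (P : σ → α → σ → ℝ) (hP : ∀ s a, P s a ∈ stdSimplex ℝ σ)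
    (π : σ → α → ℝ) (hπ : ∀ s, π s ∈ stdSimplex ℝ α)
    (ρ : σ → ℝ) (hρ : ρ ∈ stdSimplex ℝ σ) :
    stepDist P π ρ ∈ stdSimplex ℝ σ := by
  have h : stepDist P π ρ = stateDist P π ρ 1 := rfl
  rw [h]; exact stateDist_mem P hP π hπ ρ hρ 1

lemma expDisc_step {γ : ℝ} (hγ0 : 0 ≤ γ) (hγ1 : γ < 1)
    (P : σ → α → σ → ℝ) (hP : ∀ s a, P s a ∈ stdSimplex ℝ σ)
    (π : σ → α → ℝ) (hπ : ∀ s, π s ∈ stdSimplex ℝ α)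
    (ρ : σ → ℝ) (hρ : ρ ∈ stdSimplex ℝ σ) (f : σ → α → ℝ) :
    expDisc γ P π ρ f
      = (∑ s, ∑ a, ρ s * π s a * f s a) + γ * expDisc γ P π (stepDist P π ρ) f := by
  unfold expDisc
  rw [Summable.tsum_eq_zero_add (expDisc_summable hγ0 hγ1 P hP π hπ ρ hρ f)]
  congr 1
  · simp [stateDist]
  · rw [← tsum_mul_left]
    refine tsum_congr fun t => ?_
    rw [stateDist_shift]
    ring

lemma stateDist_linear (P : σ → α → σ → ℝ) (π : σ → α → ℝ) (ρ : σ → ℝ) (t : ℕ) :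
    stateDist P π ρ t = fun s => ∑ s0, ρ s0 * stateDist P π (dirac s0) t s := by
  induction t with
  | zero =>
      funext s
      simp [stateDist, dirac, mul_comm]
  | succ t ih =>
      funext s'
      rw [stateDist_succ]
      simp only [ih, Finset.sum_mul, Finset.mul_sum]
      rw [sum_shuffle3 fun s a s0 =>
        ρ s0 * stateDist P π (dirac s0) t s * π s a * P s a s']
      refine Finset.sum_congr rfl fun s0 _ => ?_
      rw [stateDist_succ, Finset.mul_sum]
      refine Finset.sum_congr rfl fun s _ => ?_
      rw [Finset.mul_sum]
      exact Finset.sum_congr rfl fun a _ => by ring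

lemma expDisc_linear {γ : ℝ} (hγ0 : 0 ≤ γ) (hγ1 : γ < 1)
    (P : σ → α → σ → ℝ) (hP : ∀ s a, P s a ∈ stdSimplex ℝ σ)
    (π : σ → α → ℝ) (hπ : ∀ s, π s ∈ stdSimplex ℝ α)
    (ρ : σ → ℝ) (f : σ → α → ℝ) :
    expDisc γ P π ρ f = ∑ s0, ρ s0 * expDisc γ P π (dirac s0) f := by
  unfold expDisc
  have h : ∀ t : ℕ, γ ^ t * ∑ s, ∑ a, stateDist P π ρ t s * π s a * f s a
      = ∑ s0, ρ s0 * (γ ^ t * ∑ s, ∑ a, stateDist P π (dirac s0) t s * π s a * f s a) := by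
    intro t
    simp only [stateDist_linear P π ρ t, Finset.sum_mul, Finset.mul_sum]
    rw [sum_shuffle3 fun s a s0 =>
      γ ^ t * (ρ s0 * stateDist P π (dirac s0) t s * π s a * f s a)]
    refine Finset.sum_congr rfl fun s0 _ => Finset.sum_congr rfl fun s _ =>
      Finset.sum_congr rfl fun a _ => by ring
  rw [tsum_congr h, Summable.tsum_finsetSum fun s0 _ =>
    Summable.mul_left _ (expDisc_summable hγ0 hγ1 P hP π hπ (dirac s0) (dirac_mem s0) f)]
  exact Finset.sum_congr rfl fun s0 _ => tsum_mul_left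

end MDPTheory
section Bellman
set_option linter.unusedSectionVars false

variable {σ α : Type} [Fintype σ] [Fintype α] [DecidableEq σ] [Nonempty σ] [Nonempty α]

/-- Value of a stationary policy started at `s`. -/
noncomputable def Vgen (γ : ℝ) (P : σ → α → σ → ℝ) (π : σ → α → ℝ)
    (f : σ → α → ℝ) (s : σ) : ℝ :=
  expDisc γ P π (dirac s) f

/-- State-action value relative to a value estimate `V`. -/
noncomputable def Qf (γ : ℝ) (P : σ → α → σ → ℝ) (f : σ → α → ℝ)
    (V : σ → ℝ) (s : σ) (a : α) : ℝ :=
  f s a + γ * ∑ s', P s a s' * V s'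

/-- Bellman optimality operator. -/
noncomputable def Topt (γ : ℝ) (P : σ → α → σ → ℝ) (f : σ → α → ℝ)
    (V : σ → ℝ) : σ → ℝ :=
  fun s => Finset.univ.sup' Finset.univ_nonempty (Qf γ P f V s)

lemma Vgen_bellman {γ : ℝ} (hγ0 : 0 ≤ γ) (hγ1 : γ < 1)
    (P : σ → α → σ → ℝ) (hP : ∀ s a, P s a ∈ stdSimplex ℝ σ)
    (π : σ → α → ℝ) (hπ : ∀ s, π s ∈ stdSimplex ℝ α)
    (f : σ → α → ℝ) (s : σ) :
    Vgen γ P π f s = ∑ a, π s a * Qf γ P f (Vgen γ P π f) s a := by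
  unfold Vgen
  rw [expDisc_step hγ0 hγ1 P hP π hπ (dirac s) (dirac_mem s) f,
    expDisc_linear hγ0 hγ1 P hP π hπ (stepDist P π (dirac s)) f]
  have h1 : ∑ s', ∑ a, dirac s s' * π s' a * f s' a = ∑ a, π s a * f s a := by
    rw [Finset.sum_eq_single s
      (fun s' _ hne => by simp [dirac, hne])
      (fun h => absurd (Finset.mem_univ s) h)]
    simp [dirac]
  have h2 : ∀ s0, stepDist P π (dirac s) s0 = ∑ a, π s a * P s a s0 := by
    intro s0
    unfold stepDist
    rw [Finset.sum_eq_single s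
      (fun s' _ hne => by simp [dirac, hne])
      (fun h => absurd (Finset.mem_univ s) h)]
    simp [dirac]
  simp only [h1, h2, Qf]
  have key : γ * ∑ s0, (∑ a, π s a * P s a s0) * expDisc γ P π (dirac s0) f
      = ∑ a, π s a * (γ * ∑ s0, P s a s0 * expDisc γ P π (dirac s0) f) := by
    simp only [Finset.mul_sum, Finset.sum_mul]
    rw [Finset.sum_comm]
    exact Finset.sum_congr rfl fun a _ => Finset.sum_congr rfl fun s0 _ => by ring
  rw [key, ← Finset.sum_add_distrib]
  exact Finset.sum_congr rfl fun a _ => by ring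

lemma sum_weight_le_sup' {w q : α → ℝ} (hw : w ∈ stdSimplex ℝ α) :
    ∑ a, w a * q a ≤ Finset.univ.sup' Finset.univ_nonempty q := by
  calc ∑ a, w a * q a
      ≤ ∑ a, w a * Finset.univ.sup' Finset.univ_nonempty q :=
        Finset.sum_le_sum fun a _ =>
          mul_le_mul_of_nonneg_left (Finset.le_sup' q (Finset.mem_univ a)) (hw.1 a)
    _ = Finset.univ.sup' Finset.univ_nonempty q := by rw [← Finset.sum_mul, hw.2, one_mul]

lemma det_row_apply {π : α → ℝ} (hmem : π ∈ stdSimplex ℝ α) {a0 : α}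
    (h1 : π a0 = 1) (g : α → ℝ) :
    ∑ a, π a * g a = g a0 := by
  classical
  have hsum : ∑ a ∈ Finset.univ.erase a0, π a = 0 := by
    have h := Finset.add_sum_erase Finset.univ π (Finset.mem_univ a0)
    rw [hmem.2, h1] at h
    linarith
  have hz : ∀ a ∈ Finset.univ.erase a0, π a = 0 := by
    intro a ha
    refine le_antisymm ?_ (hmem.1 a)
    calc π a ≤ ∑ b ∈ Finset.univ.erase a0, π b :=
          Finset.single_le_sum (fun b _ => hmem.1 b) ha
      _ = 0 := hsum
  rw [← Finset.add_sum_erase Finset.univ (fun a => π a * g a) (Finset.mem_univ a0), h1,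
    one_mul, Finset.sum_eq_zero (fun a ha => by rw [hz a ha, zero_mul]), add_zero]

lemma Qf_sub (γ : ℝ) (P : σ → α → σ → ℝ) (f : σ → α → ℝ) (V W : σ → ℝ) (s : σ) (a : α) :
    Qf γ P f V s a - Qf γ P f W s a = γ * ∑ s', P s a s' * (V s' - W s') := by
  have h : ∑ s', P s a s' * (V s' - W s')
      = ∑ s', P s a s' * V s' - ∑ s', P s a s' * W s' := by
    rw [← Finset.sum_sub_distrib]
    exact Finset.sum_congr rfl fun s' _ => by ring
  unfold Qf
  rw [h]
  ring

lemma Topt_sub_le {γ : ℝ} (hγ0 : 0 ≤ γ) (P : σ → α → σ → ℝ)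
    (hP : ∀ s a, P s a ∈ stdSimplex ℝ σ) (f : σ → α → ℝ) (V W : σ → ℝ) (s : σ) :
    Topt γ P f V s - Topt γ P f W s ≤ γ * dist V W := by
  rw [sub_le_iff_le_add]
  refine Finset.sup'_le _ _ fun a _ => ?_
  have hb : ∑ s', P s a s' * V s' - ∑ s', P s a s' * W s' ≤ dist V W := by
    rw [← Finset.sum_sub_distrib]
    calc ∑ s', (P s a s' * V s' - P s a s' * W s')
        = ∑ s', P s a s' * (V s' - W s') :=
          Finset.sum_congr rfl fun s' _ => by ring
      _ ≤ ∑ s', P s a s' * dist V W :=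
          Finset.sum_le_sum fun s' _ => mul_le_mul_of_nonneg_left
            ((le_abs_self _).trans (by rw [← Real.dist_eq]; exact dist_le_pi_dist V W s'))
            ((hP s a).1 s')
      _ = dist V W := by rw [← Finset.sum_mul, (hP s a).2, one_mul]
  have hq : Qf γ P f V s a ≤ γ * dist V W + Qf γ P f W s a := by
    unfold Qf
    have := mul_le_mul_of_nonneg_left hb hγ0
    linarith
  exact hq.trans (add_le_add le_rfl (Finset.le_sup' _ (Finset.mem_univ a)))

lemma Topt_contracting {γ : ℝ} (hγ0 : 0 ≤ γ) (hγ1 : γ < 1) (P : σ → α → σ → ℝ)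
    (hP : ∀ s a, P s a ∈ stdSimplex ℝ σ) (f : σ → α → ℝ) :
    ContractingWith γ.toNNReal (Topt γ P f) := by
  constructor
  · rwa [← Real.toNNReal_one, Real.toNNReal_lt_toNNReal_iff_of_nonneg hγ0]
  · refine LipschitzWith.of_dist_le_mul fun V W => ?_
    rw [Real.coe_toNNReal γ hγ0, dist_pi_le_iff (by positivity)]
    intro s
    rw [Real.dist_eq, abs_sub_le_iff]
    constructor
    · exact Topt_sub_le hγ0 P hP f V W s
    · rw [dist_comm]
      exact Topt_sub_le hγ0 P hP f W V s

/-- Existence of an optimal deterministic policy. -/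
lemma exists_det_optimal {γ : ℝ} (hγ0 : 0 ≤ γ) (hγ1 : γ < 1) (P : σ → α → σ → ℝ)
    (hP : ∀ s a, P s a ∈ stdSimplex ℝ σ) (f : σ → α → ℝ) :
    ∃ d : σ → α, ∀ πd : σ → α → ℝ, (∀ s, πd s ∈ stdSimplex ℝ α) →
      (∀ s, πd s (d s) = 1) →
      ∀ π : σ → α → ℝ, (∀ s, π s ∈ stdSimplex ℝ α) → ∀ s : σ,
        Vgen γ P π f s ≤ Vgen γ P πd f s := by
  obtain ⟨Vstar, hfix⟩ : ∃ V : σ → ℝ, Topt γ P f V = V :=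
    ⟨_, (Topt_contracting hγ0 hγ1 P hP f).fixedPoint_isFixedPt⟩
  have hd : ∀ s : σ, ∃ b ∈ Finset.univ, ∀ a ∈ Finset.univ,
      Qf γ P f Vstar s a ≤ Qf γ P f Vstar s b :=
    fun s => Finset.exists_max_image Finset.univ (Qf γ P f Vstar s) Finset.univ_nonempty
  choose d hdmem hdmax using hd
  have hTd : ∀ s, Topt γ P f Vstar s = Qf γ P f Vstar s (d s) := fun s =>
    le_antisymm (Finset.sup'_le _ _ fun a _ => hdmax s a (Finset.mem_univ a))
      (Finset.le_sup' _ (Finset.mem_univ (d s)))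
  refine ⟨d, fun πd hπd hπd1 π hπ s => ?_⟩
  -- Step A : the value of πd is Vstar
  have hVd : ∀ s, Vgen γ P πd f s = Vstar s := by
    have hb : ∀ s, Vgen γ P πd f s - Vstar s
        = γ * ∑ s', P s (d s) s' * (Vgen γ P πd f s' - Vstar s') := by
      intro s
      have h1 : Vgen γ P πd f s = Qf γ P f (Vgen γ P πd f) s (d s) := by
        rw [Vgen_bellman hγ0 hγ1 P hP πd hπd f s]
        exact det_row_apply (hπd s) (hπd1 s) _
      have h2 : Vstar s = Qf γ P f Vstar s (d s) :=
        (congrFun hfix s).symm.trans (hTd s)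
      rw [h1]
      conv_lhs => rw [h2]
      exact Qf_sub γ P f (Vgen γ P πd f) Vstar s (d s)
    -- take the state maximizing |Vgen - Vstar|
    obtain ⟨s1, -, hs1⟩ := Finset.exists_max_image Finset.univ
      (fun s => |Vgen γ P πd f s - Vstar s|) Finset.univ_nonempty
    have hM : |Vgen γ P πd f s1 - Vstar s1| ≤ γ * |Vgen γ P πd f s1 - Vstar s1| := by
      calc |Vgen γ P πd f s1 - Vstar s1|
          = γ * |∑ s', P s1 (d s1) s' * (Vgen γ P πd f s' - Vstar s')| := by
            rw [hb s1, abs_mul, abs_of_nonneg hγ0]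
        _ ≤ γ * ∑ s', P s1 (d s1) s' * |Vgen γ P πd f s1 - Vstar s1| := by
            refine mul_le_mul_of_nonneg_left ?_ hγ0
            refine (Finset.abs_sum_le_sum_abs _ _).trans (Finset.sum_le_sum fun s' _ => ?_)
            rw [abs_mul, abs_of_nonneg ((hP s1 (d s1)).1 s')]
            exact mul_le_mul_of_nonneg_left (hs1 s' (Finset.mem_univ s'))
              ((hP s1 (d s1)).1 s')
        _ = γ * |Vgen γ P πd f s1 - Vstar s1| := by
            rw [← Finset.sum_mul, (hP s1 (d s1)).2, one_mul]
    have hM0 : |Vgen γ P πd f s1 - Vstar s1| ≤ 0 := by nlinarith [abs_nonneg (Vgen γ P πd f s1 - Vstar s1)]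
    intro s
    have := (hs1 s (Finset.mem_univ s)).trans hM0
    have habs := abs_nonneg (Vgen γ P πd f s - Vstar s)
    have : |Vgen γ P πd f s - Vstar s| = 0 := le_antisymm this habs
    have := abs_eq_zero.mp this
    linarith
  -- Step B : any stochastic policy is dominated by Vstar
  have hle : ∀ s, Vgen γ P π f s ≤ Vstar s := by
    obtain ⟨s0, -, hs0⟩ := Finset.exists_max_image Finset.univ
      (fun s => Vgen γ P π f s - Vstar s) Finset.univ_nonempty
    have hM : Vgen γ P π f s0 - Vstar s0 ≤ γ * (Vgen γ P π f s0 - Vstar s0) := by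
      have h1 : Vgen γ P π f s0 = ∑ a, π s0 a * Qf γ P f (Vgen γ P π f) s0 a :=
        Vgen_bellman hγ0 hγ1 P hP π hπ f s0
      have h2 : ∑ a, π s0 a * Qf γ P f Vstar s0 a ≤ Vstar s0 := by
        have h2' : ∑ a, π s0 a * Qf γ P f Vstar s0 a ≤ Topt γ P f Vstar s0 :=
          sum_weight_le_sup' (hπ s0)
        exact h2'.trans (le_of_eq (congrFun hfix s0))
      have h3 : ∑ a, π s0 a * Qf γ P f (Vgen γ P π f) s0 a
          - ∑ a, π s0 a * Qf γ P f Vstar s0 a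
          ≤ γ * (Vgen γ P π f s0 - Vstar s0) := by
        rw [← Finset.sum_sub_distrib]
        have hterm : ∀ a, π s0 a * Qf γ P f (Vgen γ P π f) s0 a
            - π s0 a * Qf γ P f Vstar s0 a
            = π s0 a * (γ * ∑ s', P s0 a s' * (Vgen γ P π f s' - Vstar s')) := by
          intro a
          rw [← mul_sub, Qf_sub γ P f (Vgen γ P π f) Vstar s0 a]
        simp only [hterm]
        calc ∑ a, π s0 a * (γ * ∑ s', P s0 a s' * (Vgen γ P π f s' - Vstar s'))
            ≤ ∑ a, π s0 a * (γ * (Vgen γ P π f s0 - Vstar s0)) := by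
              refine Finset.sum_le_sum fun a _ => ?_
              refine mul_le_mul_of_nonneg_left ?_ ((hπ s0).1 a)
              refine mul_le_mul_of_nonneg_left ?_ hγ0
              calc ∑ s', P s0 a s' * (Vgen γ P π f s' - Vstar s')
                  ≤ ∑ s', P s0 a s' * (Vgen γ P π f s0 - Vstar s0) :=
                    Finset.sum_le_sum fun s' _ => mul_le_mul_of_nonneg_left
                      (hs0 s' (Finset.mem_univ s')) ((hP s0 a).1 s')
                _ = Vgen γ P π f s0 - Vstar s0 := by
                    rw [← Finset.sum_mul, (hP s0 a).2, one_mul]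
            _ = γ * (Vgen γ P π f s0 - Vstar s0) := by
              rw [← Finset.sum_mul, (hπ s0).2, one_mul]
      linarith
    have hM0 : Vgen γ P π f s0 - Vstar s0 ≤ 0 := by nlinarith
    intro s
    have := (hs0 s (Finset.mem_univ s)).trans hM0
    linarith
  rw [hVd s]
  exact hle s

end Bellman


/-- For a Markov potential game, there is at least one global
maximizer of the total potential function `Φ` over `X` that is a pure
(deterministic) Nash equilibrium. -/
theorem mpg_exists_pure_nash_maximizing_potential
    {N : ℕ} {S : Type} {A : Fin N → Type}
    [Fintype S] [DecidableEq S] [Nonempty S]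
    [∀ i, Fintype (A i)] [∀ i, Nonempty (A i)]
    (γ : ℝ) (hγ0 : 0 ≤ γ) (hγ1 : γ < 1)
    (P : S → (∀ i, A i) → S → ℝ) (hP : ∀ s a, P s a ∈ stdSimplex ℝ S)
    (r : Fin N → S → (∀ i, A i) → ℝ)
    (ρ : S → ℝ) (hρ : ρ ∈ stdSimplex ℝ S)
    (φ : S → (∀ i, A i) → ℝ)
    -- the game is an MPG with potential function φ:
    (hMPG : ∀ i : Fin N, ∀ θ : ∀ j, S → A j → ℝ, feasible θ →
      ∀ θi' : S → A i → ℝ, (∀ s, θi' s ∈ stdSimplex ℝ (A i)) → ∀ s : S,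
        valueV γ P (Function.update θ i θi') (r i) s - valueV γ P θ (r i) s
          = valueV γ P (Function.update θ i θi') φ s - valueV γ P θ φ s) :
    ∃ θs : ∀ i, S → A i → ℝ,
      feasible θs ∧
      -- θs is a global maximizer of the total potential Φ over X:
      (∀ θ : ∀ i, S → A i → ℝ, feasible θ → Jtot γ P ρ θ φ ≤ Jtot γ P ρ θs φ) ∧
      -- θs is pure (deterministic):
      (∀ i : Fin N, ∀ s : S, ∃ a : A i, θs i s a = 1) ∧
      -- θs is a Nash equilibrium:
      (∀ i : Fin N, ∀ θi' : S → A i → ℝ,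
        (∀ s, θi' s ∈ stdSimplex ℝ (A i)) →
        Jtot γ P ρ (Function.update θs i θi') (r i) ≤ Jtot γ P ρ θs (r i)) := by
  classical
  obtain ⟨d, hd⟩ := exists_det_optimal (σ := S) (α := ∀ i, A i) hγ0 hγ1 P hP φ
  set θs : ∀ i, S → A i → ℝ := fun i s a => if a = d s i then 1 else 0 with hθs
  have hfeas : feasible θs := by
    intro i s
    constructor
    · intro a; dsimp [θs]; split <;> norm_num
    · simp [θs]
  have jstoch : ∀ θ : ∀ i, S → A i → ℝ, feasible θ →
      ∀ s, jointPi θ s ∈ stdSimplex ℝ (∀ i, A i) := by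
    intro θ hθ s
    constructor
    · intro a; exact Finset.prod_nonneg fun i _ => (hθ i s).1 (a i)
    · show ∑ a : ∀ i, A i, ∏ i, θ i s (a i) = 1
      rw [← Fintype.prod_sum]
      exact Finset.prod_eq_one fun i _ => (hθ i s).2
  have hpis : ∀ s, jointPi θs s ∈ stdSimplex ℝ (∀ i, A i) := jstoch θs hfeas
  have hdet1 : ∀ s, jointPi θs s (d s) = 1 := by
    intro s; simp [jointPi, θs]
  have hJ : ∀ (θ : ∀ i, S → A i → ℝ), feasible θ → ∀ g : S → (∀ i, A i) → ℝ,
      Jtot γ P ρ θ g = ∑ s0, ρ s0 * valueV γ P θ g s0 := by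
    intro θ hθ g
    exact expDisc_linear hγ0 hγ1 P hP (jointPi θ) (jstoch θ hθ) ρ g
  have hmax : ∀ θ : ∀ i, S → A i → ℝ, feasible θ →
      Jtot γ P ρ θ φ ≤ Jtot γ P ρ θs φ := by
    intro θ hθ
    rw [hJ θ hθ φ, hJ θs hfeas φ]
    refine Finset.sum_le_sum fun s0 _ => mul_le_mul_of_nonneg_left ?_ (hρ.1 s0)
    exact hd (jointPi θs) hpis hdet1 (jointPi θ) (jstoch θ hθ) s0
  refine ⟨θs, hfeas, hmax, fun i s => ⟨d s i, by simp [θs]⟩, ?_⟩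
  intro i θi' hθi'
  have hupd : feasible (Function.update θs i θi') := by
    intro j s
    by_cases h : j = i
    · subst h; rw [Function.update_self]; exact hθi' s
    · rw [Function.update_of_ne h]; exact hfeas j s
  have hkey := hMPG i θs hfeas θi' hθi'
  have hΦ : Jtot γ P ρ (Function.update θs i θi') φ ≤ Jtot γ P ρ θs φ := hmax _ hupd
  rw [hJ _ hupd φ, hJ _ hfeas φ] at hΦ
  rw [hJ _ hupd (r i), hJ _ hfeas (r i)]
  have expand : ∑ s0, ρ s0 * valueV γ P (Function.update θs i θi') (r i) s0
      - ∑ s0, ρ s0 * valueV γ P θs (r i) s0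
      = ∑ s0, ρ s0 * valueV γ P (Function.update θs i θi') φ s0
      - ∑ s0, ρ s0 * valueV γ P θs φ s0 := by
    rw [← Finset.sum_sub_distrib, ← Finset.sum_sub_distrib]
    refine Finset.sum_congr rfl fun s0 _ => ?_
    rw [← mul_sub, ← mul_sub, hkey s0]
  linarith
end
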